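/- arXiv:2004.12199 — 9 statements merged into one kernel-verified Lean document; each statement's English description precedes it below -/
import Mathlib

section
/- The unique minimizer x̂ of the network Lasso objective h satisfies 0 ≤ x̂_i ≤ 1 for every node i ∈ V. -/
open Finset

/-- Total variation of a graph signal `x` w.r.t. oriented edge set `E` and weights `W`. -/
noncomputable def TV {n : ℕ} (E : Finset (Fin n × Fin n)) (W : Fin n × Fin n → ℝ)
    (x : Fin n → ℝ) : ℝ :=
  ∑ e ∈ E, W e * |x e.1 - x e.2|

/-- The network Lasso objective. -/
noncomputable def nLasso {n : ℕ} (E : Finset (Fin n × Fin n)) (W : Fin n × Fin n → ℝ)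
    (S : Finset (Fin n)) (α lam : ℝ) (x : Fin n → ℝ) : ℝ :=
  ∑ i ∈ S, (x i - 1) ^ 2 / 2 + ∑ i ∈ Sᶜ, α * x i ^ 2 / 2 + lam * TV E W x

/-- Divergence of the flow `y` at node `i`: outgoing minus incoming flow. -/
noncomputable def divg {n : ℕ} (E : Finset (Fin n × Fin n)) (y : Fin n × Fin n → ℝ)
    (i : Fin n) : ℝ :=
  ∑ e ∈ E.filter (fun e => e.1 = i), y e - ∑ e ∈ E.filter (fun e => e.2 = i), y e

/-- The dual (flow) objective of the network Lasso. -/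
noncomputable def dualObj {n : ℕ} (E : Finset (Fin n × Fin n)) (S : Finset (Fin n))
    (α : ℝ) (y : Fin n × Fin n → ℝ) : ℝ :=
  -∑ i ∈ S, (divg E y i ^ 2 / 2 - divg E y i) - ∑ i ∈ Sᶜ, divg E y i ^ 2 / (2 * α)

/-- The boundary of a node set `C`: edges with exactly one endpoint in `C`. -/
def bdry {n : ℕ} (E : Finset (Fin n × Fin n)) (C : Finset (Fin n)) :
    Finset (Fin n × Fin n) :=
  E.filter (fun e => (e.1 ∈ C ∧ e.2 ∉ C) ∨ (e.1 ∉ C ∧ e.2 ∈ C))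

/-- Clamp a real number to `[0,1]`. -/
noncomputable def clamp01 (a : ℝ) : ℝ := min 1 (max 0 a)

lemma min1_lip (u v : ℝ) : |min 1 u - min 1 v| ≤ |u - v| := by
  rw [abs_sub_le_iff]
  constructor <;>
    rcases le_total u 1 with h | h <;> rcases le_total v 1 with h' | h' <;>
      simp [min_eq_left, min_eq_right, *] <;>
      nlinarith [le_abs_self (u - v), neg_abs_le (u - v), abs_nonneg (u - v)]

lemma clamp01_lipschitz (a b : ℝ) : |clamp01 a - clamp01 b| ≤ |a - b| := by
  have h1 : |max 0 a - max 0 b| ≤ |a - b| := by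
    have := abs_max_sub_max_le_abs a b 0
    simpa [max_comm] using this
  exact (min1_lip _ _).trans h1

lemma clamp01_sq_le (a : ℝ) : clamp01 a ^ 2 ≤ a ^ 2 := by
  unfold clamp01
  rcases le_total a 0 with h | h
  · rw [max_eq_left h, min_eq_right zero_le_one]; nlinarith
  · rw [max_eq_right h]
    rcases le_total a 1 with h1 | h1
    · rw [min_eq_right h1]
    · rw [min_eq_left h1]; nlinarith

lemma clamp01_sub_one_sq_le (a : ℝ) : (clamp01 a - 1) ^ 2 ≤ (a - 1) ^ 2 := by
  unfold clamp01
  rcases le_total a 0 with h | h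
  · rw [max_eq_left h, min_eq_right zero_le_one]; nlinarith
  · rw [max_eq_right h]
    rcases le_total a 1 with h1 | h1
    · rw [min_eq_right h1]
    · rw [min_eq_left h1]; nlinarith

lemma clamp01_sq_lt (a : ℝ) (h : ¬(0 ≤ a ∧ a ≤ 1)) : clamp01 a ^ 2 < a ^ 2 := by
  unfold clamp01
  push_neg at h
  rcases lt_or_ge a 0 with h0 | h0
  · rw [max_eq_left h0.le, min_eq_right zero_le_one]; nlinarith
  · have h1 : 1 < a := h h0
    rw [max_eq_right h0, min_eq_left h1.le]; nlinarith

lemma clamp01_sub_one_sq_lt (a : ℝ) (h : ¬(0 ≤ a ∧ a ≤ 1)) :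
    (clamp01 a - 1) ^ 2 < (a - 1) ^ 2 := by
  unfold clamp01
  push_neg at h
  rcases lt_or_ge a 0 with h0 | h0
  · rw [max_eq_left h0.le, min_eq_right zero_le_one]; nlinarith
  · have h1 : 1 < a := h h0
    rw [max_eq_right h0, min_eq_left h1.le]; nlinarith

/-- Any minimizer of the nLasso objective takes values in `[0,1]`. -/
theorem nLasso_minimizer_mem_unit_interval
    (n : ℕ) (E : Finset (Fin n × Fin n)) (hE : ∀ e ∈ E, e.1 < e.2)
    (W : Fin n × Fin n → ℝ) (hW : ∀ e ∈ E, 0 < W e)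
    (S : Finset (Fin n)) (hS : S.Nonempty)
    (α lam : ℝ) (hα : 0 < α) (hlam : 0 < lam)
    (xhat : Fin n → ℝ)
    (hmin : ∀ z : Fin n → ℝ, nLasso E W S α lam xhat ≤ nLasso E W S α lam z) :
    ∀ i : Fin n, 0 ≤ xhat i ∧ xhat i ≤ 1 := by
  intro i
  by_contra hbad
  set z : Fin n → ℝ := fun j => clamp01 (xhat j) with hz
  -- TV decreases
  have hTV : TV E W z ≤ TV E W xhat := by
    unfold TV
    refine Finset.sum_le_sum fun e he => ?_
    exact mul_le_mul_of_nonneg_left (clamp01_lipschitz _ _) (hW e he).le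
  -- seed-term sums
  have hseed_le : ∀ j ∈ S, (z j - 1) ^ 2 / 2 ≤ (xhat j - 1) ^ 2 / 2 := fun j _ => by
    have := clamp01_sub_one_sq_le (xhat j); simp only [hz]; linarith
  have hcomp_le : ∀ j ∈ Sᶜ, α * z j ^ 2 / 2 ≤ α * xhat j ^ 2 / 2 := fun j _ => by
    have := clamp01_sq_le (xhat j)
    have := mul_le_mul_of_nonneg_left this hα.le
    linarith
  have hlt : nLasso E W S α lam z < nLasso E W S α lam xhat := by
    unfold nLasso
    have hTV' : lam * TV E W z ≤ lam * TV E W xhat :=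
      mul_le_mul_of_nonneg_left hTV hlam.le
    by_cases hiS : i ∈ S
    · have h1 : ∑ j ∈ S, (z j - 1) ^ 2 / 2 < ∑ j ∈ S, (xhat j - 1) ^ 2 / 2 := by
        refine Finset.sum_lt_sum hseed_le ⟨i, hiS, ?_⟩
        have := clamp01_sub_one_sq_lt (xhat i) hbad
        simp only [hz]; linarith
      have h2 : ∑ j ∈ Sᶜ, α * z j ^ 2 / 2 ≤ ∑ j ∈ Sᶜ, α * xhat j ^ 2 / 2 :=
        Finset.sum_le_sum hcomp_le
      linarith
    · have h1 : ∑ j ∈ S, (z j - 1) ^ 2 / 2 ≤ ∑ j ∈ S, (xhat j - 1) ^ 2 / 2 :=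
        Finset.sum_le_sum hseed_le
      have h2 : ∑ j ∈ Sᶜ, α * z j ^ 2 / 2 < ∑ j ∈ Sᶜ, α * xhat j ^ 2 / 2 := by
        refine Finset.sum_lt_sum hcomp_le ⟨i, Finset.mem_compl.mpr hiS, ?_⟩
        have := clamp01_sq_lt (xhat i) hbad
        have := mul_lt_mul_of_pos_left this hα
        linarith
      linarith
  exact absurd (hmin z) (not_le.mpr hlt)
end

section
/- Strong duality holds between the network Lasso problem and its flow-based dual: the minimum over x : V → ℝ of h(x) equals the maximum over all feasible flows y (those with |y_e| ≤ λ W_e for every e ∈ E) of the dual objective D(y) = − Σ_{i∈S} (div_i(y)²/2 − div_i(y)) − Σ_{i∉S} div_i(y)²/(2α), and both the minimum and the maximum are attained. -/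
open Finset

lemma sum_mul_divg {n : ℕ} (E : Finset (Fin n × Fin n)) (x : Fin n → ℝ)
    (y : Fin n × Fin n → ℝ) :
    ∑ i, x i * divg E y i = ∑ e ∈ E, y e * (x e.1 - x e.2) := by
  unfold divg
  have h1 : ∑ i, x i * ∑ e ∈ E.filter (fun e => e.1 = i), y e
      = ∑ e ∈ E, x e.1 * y e := by
    calc ∑ i, x i * ∑ e ∈ E.filter (fun e => e.1 = i), y e
        = ∑ i, ∑ e ∈ E.filter (fun e => e.1 = i), x e.1 * y e := by
          refine Finset.sum_congr rfl fun i _ => ?_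
          rw [Finset.mul_sum]
          exact Finset.sum_congr rfl fun e he => by rw [(Finset.mem_filter.mp he).2]
      _ = ∑ e ∈ E, x e.1 * y e := Finset.sum_fiberwise E _ _
  have h2 : ∑ i, x i * ∑ e ∈ E.filter (fun e => e.2 = i), y e
      = ∑ e ∈ E, x e.2 * y e := by
    calc ∑ i, x i * ∑ e ∈ E.filter (fun e => e.2 = i), y e
        = ∑ i, ∑ e ∈ E.filter (fun e => e.2 = i), x e.2 * y e := by
          refine Finset.sum_congr rfl fun i _ => ?_
          rw [Finset.mul_sum]
          exact Finset.sum_congr rfl fun e he => by rw [(Finset.mem_filter.mp he).2]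
      _ = ∑ e ∈ E, x e.2 * y e := Finset.sum_fiberwise E _ _
  simp only [mul_sub]
  rw [Finset.sum_sub_distrib, h1, h2, ← Finset.sum_sub_distrib]
  exact Finset.sum_congr rfl fun e _ => by ring

lemma sum_update_eq {n : ℕ} (s : Finset (Fin n × Fin n)) (y : Fin n × Fin n → ℝ)
    (e : Fin n × Fin n) (t : ℝ) :
    ∑ e' ∈ s, Function.update y e t e' =
      ∑ e' ∈ s, y e' + (if e ∈ s then t - y e else 0) := by
  by_cases h : e ∈ s
  · rw [if_pos h, Finset.sum_update_of_mem h]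
    rw [← Finset.erase_eq, Finset.sum_erase_eq_sub h]
    ring
  · rw [if_neg h, add_zero]
    exact Finset.sum_congr rfl fun e' he' => Function.update_of_ne (by rintro rfl; exact h he') _ _

lemma divg_update {n : ℕ} (E : Finset (Fin n × Fin n)) (y : Fin n × Fin n → ℝ)
    (e : Fin n × Fin n) (he : e ∈ E) (t : ℝ) (i : Fin n) :
    divg E (Function.update y e t) i = divg E y i +
      (t - y e) * ((if e.1 = i then (1:ℝ) else 0) - (if e.2 = i then 1 else 0)) := by
  unfold divg
  rw [sum_update_eq, sum_update_eq]
  by_cases h1 : e.1 = i <;> by_cases h2 : e.2 = i <;>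
    simp [Finset.mem_filter, he, h1, h2] <;> ring

lemma box_opt_neg {a b g κ : ℝ} (hκ : 0 ≤ κ) (hab : -b ≤ a) (hab2 : a ≤ b)
    (h : ∀ s : ℝ, -b ≤ a + s → a + s ≤ b → s * g - s^2 * κ ≤ 0) (hg : g < 0) :
    a = -b := by
  by_contra hne
  have ha : -b < a := lt_of_le_of_ne hab (Ne.symm hne)
  set s0 := min (a + b) (-g / (κ + 1)) with hs0def
  have hκ1 : (0:ℝ) < κ + 1 := by linarith
  have hs0pos : 0 < s0 := lt_min (by linarith) (div_pos (by linarith) hκ1)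
  have hs0le : s0 ≤ a + b := min_le_left _ _
  have h1 := h (-s0) (by linarith) (by linarith)
  have hsle : s0 * (κ + 1) ≤ -g := by
    rw [← le_div_iff₀ hκ1]; exact min_le_right _ _
  nlinarith [mul_le_mul_of_nonneg_left hsle (le_of_lt hs0pos), mul_pos hs0pos hs0pos]

lemma box_opt {a b g κ : ℝ} (hκ : 0 ≤ κ) (hab : -b ≤ a) (hab2 : a ≤ b)
    (h : ∀ s : ℝ, -b ≤ a + s → a + s ≤ b → s * g - s^2 * κ ≤ 0) :
    a * g = b * |g| := by
  rcases lt_trichotomy g 0 with hg | hg | hg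
  · have := box_opt_neg hκ hab hab2 h hg
    subst this
    rw [abs_of_neg hg]; ring
  · simp [hg]
  · have h' : ∀ s : ℝ, -b ≤ -a + s → -a + s ≤ b → s * (-g) - s^2 * κ ≤ 0 := by
      intro s hs1 hs2
      have := h (-s) (by linarith) (by linarith)
      nlinarith
    have := box_opt_neg hκ (by linarith) (by linarith) h' (by linarith)
    have haeq : a = b := by linarith
    subst haeq
    rw [abs_of_pos hg]

lemma weak_duality {n : ℕ} (E : Finset (Fin n × Fin n)) (W : Fin n × Fin n → ℝ)
    (S : Finset (Fin n)) (α lam : ℝ) (hα : 0 < α)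
    (x : Fin n → ℝ) (y : Fin n × Fin n → ℝ) (hy : ∀ e ∈ E, |y e| ≤ lam * W e) :
    dualObj E S α y ≤ nLasso E W S α lam x := by
  have key : ∑ i, x i * divg E y i ≤ lam * TV E W x := by
    rw [sum_mul_divg]
    unfold TV
    rw [Finset.mul_sum]
    refine Finset.sum_le_sum fun e he => ?_
    calc y e * (x e.1 - x e.2) ≤ |y e * (x e.1 - x e.2)| := le_abs_self _
      _ = |y e| * |x e.1 - x e.2| := abs_mul _ _
      _ ≤ (lam * W e) * |x e.1 - x e.2| :=
          mul_le_mul_of_nonneg_right (hy e he) (abs_nonneg _)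
      _ = lam * (W e * |x e.1 - x e.2|) := by ring
  have hSb : ∀ i ∈ S, -(divg E y i ^ 2 / 2 - divg E y i)
      ≤ (x i - 1) ^ 2 / 2 + x i * divg E y i := by
    intro i _
    nlinarith [sq_nonneg (x i - 1 + divg E y i)]
  have hScb : ∀ i ∈ Sᶜ, -(divg E y i ^ 2 / (2 * α))
      ≤ α * x i ^ 2 / 2 + x i * divg E y i := by
    intro i _
    have h2α : (0:ℝ) < 2 * α := by linarith
    have hid : α * x i ^ 2 / 2 + x i * divg E y i + divg E y i ^ 2 / (2 * α)
        = (α * x i + divg E y i) ^ 2 / (2 * α) := by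
      field_simp; ring
    nlinarith [div_nonneg (sq_nonneg (α * x i + divg E y i)) (le_of_lt h2α)]
  unfold dualObj nLasso
  have hsum : -∑ i ∈ S, (divg E y i ^ 2 / 2 - divg E y i)
      - ∑ i ∈ Sᶜ, divg E y i ^ 2 / (2 * α)
      ≤ ∑ i ∈ S, (x i - 1) ^ 2 / 2 + ∑ i ∈ Sᶜ, α * x i ^ 2 / 2
        + ∑ i, x i * divg E y i := by
    rw [← Finset.sum_add_sum_compl S (fun i => x i * divg E y i)]
    have l1 : ∑ i ∈ S, -(divg E y i ^ 2 / 2 - divg E y i)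
        ≤ ∑ i ∈ S, ((x i - 1) ^ 2 / 2 + x i * divg E y i) :=
      Finset.sum_le_sum hSb
    have l2 : ∑ i ∈ Sᶜ, -(divg E y i ^ 2 / (2 * α))
        ≤ ∑ i ∈ Sᶜ, (α * x i ^ 2 / 2 + x i * divg E y i) :=
      Finset.sum_le_sum hScb
    rw [Finset.sum_neg_distrib] at l1 l2
    rw [Finset.sum_add_distrib] at l1 l2
    linarith
  linarith

/-- Strong duality between nLasso and its flow-based dual: the primal minimum
and the dual maximum (over feasible flows) are both attained and are equal. -/
theorem nLasso_strong_duality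
    (n : ℕ) (E : Finset (Fin n × Fin n)) (hE : ∀ e ∈ E, e.1 < e.2)
    (W : Fin n × Fin n → ℝ) (hW : ∀ e ∈ E, 0 < W e)
    (S : Finset (Fin n)) (hS : S.Nonempty)
    (α lam : ℝ) (hα : 0 < α) (hlam : 0 < lam) :
    ∃ xhat : Fin n → ℝ, ∃ yhat : Fin n × Fin n → ℝ,
      (∀ z : Fin n → ℝ, nLasso E W S α lam xhat ≤ nLasso E W S α lam z) ∧
      (∀ e ∈ E, |yhat e| ≤ lam * W e) ∧
      (∀ y : Fin n × Fin n → ℝ, (∀ e ∈ E, |y e| ≤ lam * W e) →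
        dualObj E S α y ≤ dualObj E S α yhat) ∧
      nLasso E W S α lam xhat = dualObj E S α yhat := by
  classical
  set B : (Fin n × Fin n) → Set ℝ :=
    fun e => if e ∈ E then Set.Icc (-(lam * W e)) (lam * W e) else {0} with hB
  have hKc : IsCompact (Set.pi Set.univ B) := isCompact_univ_pi fun e => by
    by_cases h : e ∈ E
    · simp only [hB, if_pos h]; exact isCompact_Icc
    · simp only [hB, if_neg h]; exact isCompact_singleton
  have hK0 : (0 : Fin n × Fin n → ℝ) ∈ Set.pi Set.univ B := by
    intro e _
    by_cases h : e ∈ E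
    · simp only [hB, if_pos h, Set.mem_Icc, Pi.zero_apply]
      have := mul_pos hlam (hW e h)
      constructor <;> linarith
    · simp [hB, if_neg h]
  have hdivg_cont : ∀ i, Continuous fun y : Fin n × Fin n → ℝ => divg E y i := fun i =>
    (continuous_finset_sum _ fun e _ => continuous_apply e).sub
      (continuous_finset_sum _ fun e _ => continuous_apply e)
  have hcont : Continuous (dualObj E S α) := by
    unfold dualObj
    exact ((continuous_finset_sum _ fun i _ =>
      (((hdivg_cont i).pow 2).div_const 2).sub (hdivg_cont i)).neg).sub
      (continuous_finset_sum _ fun i _ => ((hdivg_cont i).pow 2).div_const (2 * α))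
  obtain ⟨yhat, hyK, hymax⟩ := hKc.exists_isMaxOn ⟨0, hK0⟩ hcont.continuousOn
  have hyfeas : ∀ e ∈ E, |yhat e| ≤ lam * W e := by
    intro e he
    have := hyK e (Set.mem_univ e)
    simp only [hB, if_pos he, Set.mem_Icc] at this
    exact abs_le.mpr this
  set d : Fin n → ℝ := fun i => divg E yhat i with hd
  set xhat : Fin n → ℝ := fun i => if i ∈ S then 1 - d i else -(d i) / α with hx
  -- complementary slackness at each edge
  have hcs : ∀ e ∈ E, yhat e * (xhat e.1 - xhat e.2)
      = lam * W e * |xhat e.1 - xhat e.2| := by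
    intro e he
    set c : Fin n → ℝ :=
      fun i => (if e.1 = i then (1:ℝ) else 0) - (if e.2 = i then 1 else 0) with hc
    set κ : ℝ := ∑ i ∈ S, c i ^ 2 / 2 + ∑ i ∈ Sᶜ, c i ^ 2 / (2 * α) with hκdef
    have hκ : 0 ≤ κ := by
      rw [hκdef]
      apply add_nonneg <;> apply Finset.sum_nonneg <;> intro i _ <;> positivity
    have hG2 : ∑ i ∈ S, c i * xhat i + ∑ i ∈ Sᶜ, c i * xhat i
        = xhat e.1 - xhat e.2 := by
      rw [Finset.sum_add_sum_compl]
      simp only [hc, sub_mul, ite_mul, one_mul, zero_mul]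
      rw [Finset.sum_sub_distrib, Finset.sum_ite_eq, Finset.sum_ite_eq]
      simp
    have hquad : ∀ s : ℝ, dualObj E S α (Function.update yhat e (yhat e + s))
        = dualObj E S α yhat + s * (xhat e.1 - xhat e.2) - s ^ 2 * κ := by
      intro s
      have hdiv : ∀ i, divg E (Function.update yhat e (yhat e + s)) i
          = d i + s * c i := by
        intro i
        rw [divg_update E yhat e he]
        simp only [hc, hd]
        ring
      unfold dualObj
      simp only [hdiv]
      have e1 : ∑ i ∈ S, ((d i + s * c i) ^ 2 / 2 - (d i + s * c i))
          = ∑ i ∈ S, (d i ^ 2 / 2 - d i) - s * ∑ i ∈ S, c i * xhat i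
            + s ^ 2 * ∑ i ∈ S, c i ^ 2 / 2 := by
        rw [Finset.mul_sum, Finset.mul_sum, ← Finset.sum_sub_distrib,
          ← Finset.sum_add_distrib]
        refine Finset.sum_congr rfl fun i hi => ?_
        simp only [hx, if_pos hi]
        ring
      have e2 : ∑ i ∈ Sᶜ, (d i + s * c i) ^ 2 / (2 * α)
          = ∑ i ∈ Sᶜ, d i ^ 2 / (2 * α) - s * ∑ i ∈ Sᶜ, c i * xhat i
            + s ^ 2 * ∑ i ∈ Sᶜ, c i ^ 2 / (2 * α) := by
        rw [Finset.mul_sum, Finset.mul_sum, ← Finset.sum_sub_distrib,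
          ← Finset.sum_add_distrib]
        refine Finset.sum_congr rfl fun i hi => ?_
        simp only [hx, if_neg (Finset.mem_compl.mp hi)]
        field_simp
        ring
      rw [e1, e2, hκdef]
      linear_combination s * hG2
    have hper : ∀ s : ℝ, -(lam * W e) ≤ yhat e + s → yhat e + s ≤ lam * W e →
        s * (xhat e.1 - xhat e.2) - s ^ 2 * κ ≤ 0 := by
      intro s hs1 hs2
      have hmem : Function.update yhat e (yhat e + s) ∈ Set.pi Set.univ B := by
        intro e' _
        by_cases he' : e' = e
        · subst he'
          rw [Function.update_self]
          simp only [hB, if_pos he, Set.mem_Icc]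
          exact ⟨hs1, hs2⟩
        · rw [Function.update_of_ne he']
          exact hyK e' (Set.mem_univ _)
      have h2 : dualObj E S α (Function.update yhat e (yhat e + s))
          ≤ dualObj E S α yhat := hymax hmem
      rw [hquad s] at h2
      linarith
    have habs := abs_le.mp (hyfeas e he)
    exact box_opt hκ habs.1 habs.2 hper
  -- equality of objectives
  have heq : nLasso E W S α lam xhat = dualObj E S α yhat := by
    have hTV : lam * TV E W xhat
        = ∑ i ∈ S, (1 - d i) * d i + ∑ i ∈ Sᶜ, (-(d i) / α) * d i := by
      unfold TV
      rw [Finset.mul_sum]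
      have h1 : ∑ e ∈ E, lam * (W e * |xhat e.1 - xhat e.2|)
          = ∑ e ∈ E, yhat e * (xhat e.1 - xhat e.2) :=
        Finset.sum_congr rfl fun e he => by rw [← mul_assoc, ← hcs e he]
      rw [h1, ← sum_mul_divg, ← Finset.sum_add_sum_compl S (fun i => xhat i * divg E yhat i)]
      congr 1
      · refine Finset.sum_congr rfl fun i hi => ?_
        simp only [hx, hd, if_pos hi]
      · refine Finset.sum_congr rfl fun i hi => ?_
        simp only [hx, hd, if_neg (Finset.mem_compl.mp hi)]
    unfold nLasso dualObj
    rw [hTV]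
    have hA : ∑ i ∈ S, (xhat i - 1) ^ 2 / 2 + ∑ i ∈ S, (1 - d i) * d i
        = -∑ i ∈ S, (d i ^ 2 / 2 - d i) := by
      rw [← Finset.sum_add_distrib, ← Finset.sum_neg_distrib]
      refine Finset.sum_congr rfl fun i hi => ?_
      simp only [hx, if_pos hi]
      ring
    have hB2 : ∑ i ∈ Sᶜ, α * xhat i ^ 2 / 2 + ∑ i ∈ Sᶜ, (-(d i) / α) * d i
        = -∑ i ∈ Sᶜ, d i ^ 2 / (2 * α) := by
      rw [← Finset.sum_add_distrib, ← Finset.sum_neg_distrib]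
      refine Finset.sum_congr rfl fun i hi => ?_
      simp only [hx, if_neg (Finset.mem_compl.mp hi)]
      field_simp
      ring
    simp only [hd] at hA hB2 ⊢
    linarith
  -- dual optimality among all feasible flows
  have hdual : ∀ y : Fin n × Fin n → ℝ, (∀ e ∈ E, |y e| ≤ lam * W e) →
      dualObj E S α y ≤ dualObj E S α yhat := by
    intro y hy
    set y' : Fin n × Fin n → ℝ := fun e' => if e' ∈ E then y e' else 0 with hy'
    have hdeq : ∀ i, divg E y' i = divg E y i := by
      intro i
      unfold divg
      congr 1 <;> refine Finset.sum_congr rfl fun e' he' => ?_ <;>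
        simp [hy', (Finset.mem_filter.mp he').1]
    have hDeq : dualObj E S α y' = dualObj E S α y := by
      unfold dualObj
      simp only [hdeq]
    have hy'K : y' ∈ Set.pi Set.univ B := by
      intro e' _
      by_cases h : e' ∈ E
      · simp only [hy', hB, if_pos h, Set.mem_Icc]
        exact abs_le.mp (hy e' h)
      · simp [hy', hB, if_neg h]
    calc dualObj E S α y = dualObj E S α y' := hDeq.symm
      _ ≤ dualObj E S α yhat := hymax hy'K
  exact ⟨xhat, yhat, fun z => heq ▸ weak_duality E W S α lam hα z yhat hyfeas,
    hyfeas, hdual, heq⟩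
end

section
/- A pair (x̂, ŷ) with x̂ : V → ℝ and ŷ : E → ℝ satisfies: x̂ minimizes h over ℝ^V and ŷ maximizes the dual objective D over all feasible flows, if and only if all of the following hold: (a) −div_i(ŷ) = x̂_i − 1 for every seed node i ∈ S; (b) −div_i(ŷ) = α x̂_i for every non-seed node i ∉ S; (c) |ŷ_e| ≤ λ W_e for every edge e ∈ E; (d) for every oriented edge e = (i,j) ∈ E: if x̂_i > x̂_j then ŷ_e = λ W_e, and if x̂_i < x̂_j then ŷ_e = −λ W_e. -/
open Finset

/-! ### Auxiliary lemmas -/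

/-- Summation by parts: pairing a node signal with a divergence equals pairing the flow with
edge differences. -/
lemma nLasso_sbp {n : ℕ} (E : Finset (Fin n × Fin n)) (y : Fin n × Fin n → ℝ)
    (f : Fin n → ℝ) :
    ∑ i, f i * divg E y i = ∑ e ∈ E, y e * (f e.1 - f e.2) := by
  unfold divg
  have h1 : ∑ i, f i * ∑ e ∈ E.filter (fun e => e.1 = i), y e
      = ∑ e ∈ E, y e * f e.1 := by
    rw [← Finset.sum_fiberwise E (fun e => e.1) (fun e => y e * f e.1)]
    refine Finset.sum_congr rfl fun i _ => ?_
    rw [Finset.mul_sum]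
    refine Finset.sum_congr rfl fun e he => ?_
    rw [(Finset.mem_filter.mp he).2]; ring
  have h2 : ∑ i, f i * ∑ e ∈ E.filter (fun e => e.2 = i), y e
      = ∑ e ∈ E, y e * f e.2 := by
    rw [← Finset.sum_fiberwise E (fun e => e.2) (fun e => y e * f e.2)]
    refine Finset.sum_congr rfl fun i _ => ?_
    rw [Finset.mul_sum]
    refine Finset.sum_congr rfl fun e he => ?_
    rw [(Finset.mem_filter.mp he).2]; ring
  simp only [mul_sub, Finset.sum_sub_distrib, h1, h2]

/-- The duality-gap identity. -/
lemma nLasso_gap_eq {n : ℕ} (E : Finset (Fin n × Fin n)) (W : Fin n × Fin n → ℝ)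
    (S : Finset (Fin n)) (α lam : ℝ) (hα : α ≠ 0)
    (x : Fin n → ℝ) (y : Fin n × Fin n → ℝ) :
    nLasso E W S α lam x - dualObj E S α y =
      ∑ i ∈ S, (x i - 1 + divg E y i) ^ 2 / 2
      + ∑ i ∈ Sᶜ, (α * x i + divg E y i) ^ 2 / (2 * α)
      + ∑ e ∈ E, (lam * W e * |x e.1 - x e.2| - y e * (x e.1 - x e.2)) := by
  have key : ∑ e ∈ E, y e * (x e.1 - x e.2)
      = ∑ i ∈ S, x i * divg E y i + ∑ i ∈ Sᶜ, x i * divg E y i := by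
    rw [Finset.sum_add_sum_compl, nLasso_sbp]
  have hS1 : ∑ i ∈ S, (x i - 1 + divg E y i) ^ 2 / 2
      = ∑ i ∈ S, ((x i - 1) ^ 2 / 2 + (divg E y i ^ 2 / 2 - divg E y i) + x i * divg E y i) := by
    refine Finset.sum_congr rfl fun i _ => ?_; ring
  have hS2 : ∑ i ∈ Sᶜ, (α * x i + divg E y i) ^ 2 / (2 * α)
      = ∑ i ∈ Sᶜ, (α * x i ^ 2 / 2 + divg E y i ^ 2 / (2 * α) + x i * divg E y i) := by
    refine Finset.sum_congr rfl fun i _ => ?_; field_simp; ring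
  rw [hS1, hS2]
  simp only [Finset.sum_add_distrib]
  have e3 : ∑ e ∈ E, (lam * W e * |x e.1 - x e.2| - y e * (x e.1 - x e.2))
      = lam * TV E W x - (∑ i ∈ S, x i * divg E y i + ∑ i ∈ Sᶜ, x i * divg E y i) := by
    rw [Finset.sum_sub_distrib, ← key]; unfold TV; rw [Finset.mul_sum]
    congr 1
    exact Finset.sum_congr rfl fun e _ => mul_assoc _ _ _
  rw [e3]
  unfold nLasso dualObj
  ring

/-- Weak duality. -/
lemma nLasso_weak_duality {n : ℕ} (E : Finset (Fin n × Fin n)) (W : Fin n × Fin n → ℝ)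
    (S : Finset (Fin n)) (α lam : ℝ) (hα : 0 < α)
    (x : Fin n → ℝ) (y : Fin n × Fin n → ℝ)
    (hfeas : ∀ e ∈ E, |y e| ≤ lam * W e) :
    dualObj E S α y ≤ nLasso E W S α lam x := by
  have h := nLasso_gap_eq E W S α lam hα.ne' x y
  have h1 : (0:ℝ) ≤ ∑ i ∈ S, (x i - 1 + divg E y i) ^ 2 / 2 :=
    Finset.sum_nonneg fun i _ => by positivity
  have h2 : (0:ℝ) ≤ ∑ i ∈ Sᶜ, (α * x i + divg E y i) ^ 2 / (2 * α) :=
    Finset.sum_nonneg fun i _ => by positivity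
  have h3 : (0:ℝ) ≤ ∑ e ∈ E, (lam * W e * |x e.1 - x e.2| - y e * (x e.1 - x e.2)) := by
    refine Finset.sum_nonneg fun e he => ?_
    have hb : y e * (x e.1 - x e.2) ≤ lam * W e * |x e.1 - x e.2| := by
      calc y e * (x e.1 - x e.2) ≤ |y e * (x e.1 - x e.2)| := le_abs_self _
        _ = |y e| * |x e.1 - x e.2| := abs_mul _ _
        _ ≤ lam * W e * |x e.1 - x e.2| :=
            mul_le_mul_of_nonneg_right (hfeas e he) (abs_nonneg _)
    linarith
  linarith

/-- If the optimality conditions (a)-(d) hold, the duality gap vanishes. -/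
lemma nLasso_gap_zero {n : ℕ} (E : Finset (Fin n × Fin n)) (W : Fin n × Fin n → ℝ)
    (S : Finset (Fin n)) (α lam : ℝ) (hα : 0 < α)
    (x : Fin n → ℝ) (y : Fin n × Fin n → ℝ)
    (ha : ∀ i ∈ S, -divg E y i = x i - 1)
    (hb : ∀ i ∉ S, -divg E y i = α * x i)
    (hd : ∀ e ∈ E, (x e.1 > x e.2 → y e = lam * W e) ∧
               (x e.1 < x e.2 → y e = -(lam * W e))) :
    nLasso E W S α lam x = dualObj E S α y := by
  have h := nLasso_gap_eq E W S α lam hα.ne' x y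
  have h1 : ∑ i ∈ S, (x i - 1 + divg E y i) ^ 2 / 2 = 0 := by
    refine Finset.sum_eq_zero fun i hi => ?_
    have := ha i hi
    have : x i - 1 + divg E y i = 0 := by linarith
    rw [this]; norm_num
  have h2 : ∑ i ∈ Sᶜ, (α * x i + divg E y i) ^ 2 / (2 * α) = 0 := by
    refine Finset.sum_eq_zero fun i hi => ?_
    have := hb i (Finset.mem_compl.mp hi)
    have : α * x i + divg E y i = 0 := by linarith
    rw [this]; norm_num
  have h3 : ∑ e ∈ E, (lam * W e * |x e.1 - x e.2| - y e * (x e.1 - x e.2)) = 0 := by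
    refine Finset.sum_eq_zero fun e he => ?_
    rcases lt_trichotomy (x e.1) (x e.2) with hlt | heq | hgt
    · rw [(hd e he).2 hlt, abs_of_neg (by linarith)]; ring
    · rw [heq]; simp
    · rw [(hd e he).1 hgt, abs_of_pos (by linarith)]; ring
  linarith

lemma nLasso_divg_update {n : ℕ} (E : Finset (Fin n × Fin n)) (y : Fin n × Fin n → ℝ)
    (e : Fin n × Fin n) (he : e ∈ E) (t : ℝ) (i : Fin n) :
    divg E (Function.update y e (y e + t)) i =
      divg E y i + ((if e.1 = i then t else 0) - (if e.2 = i then t else 0)) := by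
  have key : ∀ (s : Finset (Fin n × Fin n)), s ⊆ E →
      ∑ e' ∈ s, Function.update y e (y e + t) e' = ∑ e' ∈ s, y e' + (if e ∈ s then t else 0) := by
    intro s hs
    have hcong : ∀ e' ∈ s, Function.update y e (y e + t) e' = y e' + (if e' = e then t else 0) := by
      intro e' _
      rcases eq_or_ne e' e with h | h
      · subst h; simp [Function.update_self]
      · simp [Function.update_of_ne h, h]
    rw [Finset.sum_congr rfl hcong, Finset.sum_add_distrib, Finset.sum_ite_eq' s e (fun _ => t)]
  unfold divg
  rw [key _ (Finset.filter_subset _ _), key _ (Finset.filter_subset _ _)]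
  have m1 : (e ∈ E.filter (fun e' => e'.1 = i)) ↔ (e.1 = i) := by simp [he]
  have m2 : (e ∈ E.filter (fun e' => e'.2 = i)) ↔ (e.2 = i) := by simp [he]
  by_cases h1 : e.1 = i <;> by_cases h2 : e.2 = i <;> simp [m1, m2, h1, h2] <;> ring

lemma nLasso_dualObj_repr {n : ℕ} (E : Finset (Fin n × Fin n)) (S : Finset (Fin n))
    (α : ℝ) (y : Fin n × Fin n → ℝ) :
    dualObj E S α y = ∑ i, (if i ∈ S then -(divg E y i ^ 2 / 2 - divg E y i)
      else -(divg E y i ^ 2 / (2 * α))) := by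
  rw [← Finset.sum_add_sum_compl S]
  have h1 : ∑ i ∈ S, (if i ∈ S then -(divg E y i ^ 2 / 2 - divg E y i)
      else -(divg E y i ^ 2 / (2 * α))) = ∑ i ∈ S, -(divg E y i ^ 2 / 2 - divg E y i) :=
    Finset.sum_congr rfl fun i hi => if_pos hi
  have h2 : ∑ i ∈ Sᶜ, (if i ∈ S then -(divg E y i ^ 2 / 2 - divg E y i)
      else -(divg E y i ^ 2 / (2 * α))) = ∑ i ∈ Sᶜ, -(divg E y i ^ 2 / (2 * α)) :=
    Finset.sum_congr rfl fun i hi => if_neg (Finset.mem_compl.mp hi)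
  rw [h1, h2, Finset.sum_neg_distrib, Finset.sum_neg_distrib]
  unfold dualObj; ring

/-- Effect on the dual objective of perturbing the flow on a single edge. -/
lemma nLasso_dual_update_diff {n : ℕ} (E : Finset (Fin n × Fin n)) (S : Finset (Fin n))
    (α : ℝ) (hα : α ≠ 0) (y : Fin n × Fin n → ℝ)
    (e : Fin n × Fin n) (he : e ∈ E) (hne : e.1 ≠ e.2) (t : ℝ) :
    dualObj E S α (Function.update y e (y e + t)) =
      dualObj E S α y
      + t * ((if e.1 ∈ S then 1 - divg E y e.1 else -(divg E y e.1)/α)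
           - (if e.2 ∈ S then 1 - divg E y e.2 else -(divg E y e.2)/α))
      - t^2 * ((if e.1 ∈ S then 1/2 else 1/(2*α)) + (if e.2 ∈ S then 1/2 else 1/(2*α))) := by
  set X : Fin n → ℝ := fun i => if i ∈ S then 1 - divg E y i else -(divg E y i)/α with hX
  set c : Fin n → ℝ := fun i => if i ∈ S then 1/2 else 1/(2*α) with hc
  set s : Fin n → ℝ := fun i => (if e.1 = i then t else 0) - (if e.2 = i then t else 0) with hs
  rw [nLasso_dualObj_repr, nLasso_dualObj_repr]
  have hper : ∀ i : Fin n,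
      (if i ∈ S then -(divg E (Function.update y e (y e + t)) i ^ 2 / 2
          - divg E (Function.update y e (y e + t)) i)
        else -(divg E (Function.update y e (y e + t)) i ^ 2 / (2 * α)))
      = (if i ∈ S then -(divg E y i ^ 2 / 2 - divg E y i)
          else -(divg E y i ^ 2 / (2 * α))) + s i * X i - s i ^ 2 * c i := by
    intro i
    rw [nLasso_divg_update E y e he t i]
    simp only [hX, hc, hs]
    by_cases hiS : i ∈ S
    · simp only [if_pos hiS]; ring
    · simp only [if_neg hiS]; field_simp; ring
  simp only [hper]
  have hs1 : ∑ i, s i * X i = t * (X e.1 - X e.2) := by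
    simp only [hs, sub_mul, Finset.sum_sub_distrib, ite_mul, zero_mul,
      Finset.sum_ite_eq, Finset.mem_univ, if_true]
    ring
  have hs2 : ∑ i, s i ^ 2 * c i = t ^ 2 * (c e.1 + c e.2) := by
    have hsq : ∀ i, s i ^ 2 * c i = (if e.1 = i then t^2 * c i else 0)
        + (if e.2 = i then t^2 * c i else 0) := by
      intro i
      by_cases h1 : e.1 = i <;> by_cases h2 : e.2 = i <;>
        simp only [hs, h1, h2, if_true, if_false, ite_true, ite_false]
      · exact absurd (h1.trans h2.symm) hne
      · ring
      · ring
      · ring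
    simp only [hsq, Finset.sum_add_distrib, Finset.sum_ite_eq, Finset.mem_univ, if_true]
    ring
  rw [Finset.sum_sub_distrib, Finset.sum_add_distrib, hs1, hs2]

/-- Strict convexity: the nLasso minimizer is unique. -/
lemma nLasso_min_unique {n : ℕ} (E : Finset (Fin n × Fin n)) (W : Fin n × Fin n → ℝ)
    (hW : ∀ e ∈ E, 0 < W e) (S : Finset (Fin n)) (α lam : ℝ) (hα : 0 < α) (hlam : 0 < lam)
    (a b : Fin n → ℝ)
    (hamin : ∀ z, nLasso E W S α lam a ≤ nLasso E W S α lam z)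
    (hbmin : ∀ z, nLasso E W S α lam b ≤ nLasso E W S α lam z) :
    a = b := by
  set m : Fin n → ℝ := fun i => (a i + b i) / 2 with hm
  have heqab : nLasso E W S α lam a = nLasso E W S α lam b :=
    le_antisymm (hamin b) (hbmin a)
  have hTV : lam * TV E W m ≤ lam * (TV E W a + TV E W b) / 2 := by
    have : TV E W m ≤ (TV E W a + TV E W b) / 2 := by
      unfold TV
      rw [le_div_iff₀ (by norm_num : (0:ℝ) < 2)]
      rw [← Finset.sum_add_distrib, Finset.sum_mul]
      refine Finset.sum_le_sum fun e he => ?_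
      have habs : |m e.1 - m e.2| * 2 ≤ |a e.1 - a e.2| + |b e.1 - b e.2| := by
        have : m e.1 - m e.2 = ((a e.1 - a e.2) + (b e.1 - b e.2)) / 2 := by
          simp only [hm]; ring
        rw [this]
        calc |((a e.1 - a e.2) + (b e.1 - b e.2)) / 2| * 2
            = |(a e.1 - a e.2) + (b e.1 - b e.2)| := by rw [abs_div]; norm_num
          _ ≤ _ := abs_add_le _ _
      calc W e * |m e.1 - m e.2| * 2 = W e * (|m e.1 - m e.2| * 2) := by ring
        _ ≤ W e * (|a e.1 - a e.2| + |b e.1 - b e.2|) :=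
            mul_le_mul_of_nonneg_left habs (hW e he).le
        _ = W e * |a e.1 - a e.2| + W e * |b e.1 - b e.2| := by ring
    calc lam * TV E W m ≤ lam * ((TV E W a + TV E W b) / 2) :=
          mul_le_mul_of_nonneg_left this hlam.le
      _ = lam * (TV E W a + TV E W b) / 2 := by ring
  have hq1 : ∑ i ∈ S, (m i - 1) ^ 2 / 2
      = (∑ i ∈ S, (a i - 1) ^ 2 / 2 + ∑ i ∈ S, (b i - 1) ^ 2 / 2) / 2
        - ∑ i ∈ S, (a i - b i) ^ 2 / 8 := by
    have hsplit : (∑ i ∈ S, (a i - 1) ^ 2 / 2 + ∑ i ∈ S, (b i - 1) ^ 2 / 2) / 2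
        = ∑ i ∈ S, ((a i - 1) ^ 2 / 2 + (b i - 1) ^ 2 / 2) / 2 := by
      rw [← Finset.sum_add_distrib, Finset.sum_div]
    rw [hsplit, ← Finset.sum_sub_distrib]
    refine Finset.sum_congr rfl fun i _ => ?_
    simp only [hm]; ring
  have hq2 : ∑ i ∈ Sᶜ, α * m i ^ 2 / 2
      = (∑ i ∈ Sᶜ, α * a i ^ 2 / 2 + ∑ i ∈ Sᶜ, α * b i ^ 2 / 2) / 2
        - ∑ i ∈ Sᶜ, α * (a i - b i) ^ 2 / 8 := by
    have hsplit : (∑ i ∈ Sᶜ, α * a i ^ 2 / 2 + ∑ i ∈ Sᶜ, α * b i ^ 2 / 2) / 2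
        = ∑ i ∈ Sᶜ, (α * a i ^ 2 / 2 + α * b i ^ 2 / 2) / 2 := by
      rw [← Finset.sum_add_distrib, Finset.sum_div]
    rw [hsplit, ← Finset.sum_sub_distrib]
    refine Finset.sum_congr rfl fun i _ => ?_
    simp only [hm]; ring
  have hmid : nLasso E W S α lam m ≤ (nLasso E W S α lam a + nLasso E W S α lam b) / 2
      - (∑ i ∈ S, (a i - b i) ^ 2 / 8 + ∑ i ∈ Sᶜ, α * (a i - b i) ^ 2 / 8) := by
    unfold nLasso
    rw [hq1, hq2]
    linarith [hTV]
  have hP : ∑ i ∈ S, (a i - b i) ^ 2 / 8 + ∑ i ∈ Sᶜ, α * (a i - b i) ^ 2 / 8 ≤ 0 := by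
    have h1 := hamin m
    linarith [hmid, heqab]
  have hP1 : (0:ℝ) ≤ ∑ i ∈ S, (a i - b i) ^ 2 / 8 :=
    Finset.sum_nonneg fun i _ => by positivity
  have hP2 : (0:ℝ) ≤ ∑ i ∈ Sᶜ, α * (a i - b i) ^ 2 / 8 :=
    Finset.sum_nonneg fun i _ => by positivity
  have hz1 : ∑ i ∈ S, (a i - b i) ^ 2 / 8 = 0 := le_antisymm (by linarith) hP1
  have hz2 : ∑ i ∈ Sᶜ, α * (a i - b i) ^ 2 / 8 = 0 := le_antisymm (by linarith) hP2
  funext i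
  by_cases hiS : i ∈ S
  · have := (Finset.sum_eq_zero_iff_of_nonneg (fun j _ => by positivity)).mp hz1 i hiS
    have : (a i - b i) ^ 2 = 0 := by linarith
    have := pow_eq_zero_iff (n := 2) (by norm_num) |>.mp this
    linarith [sub_eq_zero.mp this]
  · have := (Finset.sum_eq_zero_iff_of_nonneg (fun j _ => by positivity)).mp hz2 i
      (Finset.mem_compl.mpr hiS)
    have h8 : α * (a i - b i) ^ 2 = 0 := by linarith
    have : (a i - b i) ^ 2 = 0 := by
      rcases mul_eq_zero.mp h8 with h | h
      · exact absurd h hα.ne'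
      · exact h
    have := pow_eq_zero_iff (n := 2) (by norm_num) |>.mp this
    linarith [sub_eq_zero.mp this]

/-- Primal-dual optimality conditions: `x̂` minimizes the nLasso objective and
`ŷ` maximizes the dual objective over feasible flows iff conditions (a)-(d) hold. -/
theorem nLasso_primal_dual_optimality_iff
    (n : ℕ) (E : Finset (Fin n × Fin n)) (hE : ∀ e ∈ E, e.1 < e.2)
    (W : Fin n × Fin n → ℝ) (hW : ∀ e ∈ E, 0 < W e)
    (S : Finset (Fin n)) (hS : S.Nonempty)
    (α lam : ℝ) (hα : 0 < α) (hlam : 0 < lam)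
    (xhat : Fin n → ℝ) (yhat : Fin n × Fin n → ℝ) :
    ((∀ z : Fin n → ℝ, nLasso E W S α lam xhat ≤ nLasso E W S α lam z) ∧
     (∀ e ∈ E, |yhat e| ≤ lam * W e) ∧
     (∀ y : Fin n × Fin n → ℝ, (∀ e ∈ E, |y e| ≤ lam * W e) →
       dualObj E S α y ≤ dualObj E S α yhat))
    ↔
    ((∀ i ∈ S, -divg E yhat i = xhat i - 1) ∧
     (∀ i ∉ S, -divg E yhat i = α * xhat i) ∧
     (∀ e ∈ E, |yhat e| ≤ lam * W e) ∧
     (∀ e ∈ E, (xhat e.1 > xhat e.2 → yhat e = lam * W e) ∧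
               (xhat e.1 < xhat e.2 → yhat e = -(lam * W e)))) := by
  constructor
  · rintro ⟨hmin, hfeas, hmax⟩
    set xs : Fin n → ℝ :=
      fun i => if i ∈ S then 1 - divg E yhat i else -(divg E yhat i)/α with hxs
    have hsa : ∀ i ∈ S, -divg E yhat i = xs i - 1 := by
      intro i hi; simp only [hxs, if_pos hi]; ring
    have hsb : ∀ i ∉ S, -divg E yhat i = α * xs i := by
      intro i hi; simp only [hxs, if_neg hi]; field_simp
    have hsd : ∀ e ∈ E, (xs e.1 > xs e.2 → yhat e = lam * W e) ∧
        (xs e.1 < xs e.2 → yhat e = -(lam * W e)) := by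
      intro e he
      have hne : e.1 ≠ e.2 := (hE e he).ne
      set C : ℝ := (if e.1 ∈ S then (1:ℝ)/2 else 1/(2*α))
        + (if e.2 ∈ S then (1:ℝ)/2 else 1/(2*α)) with hC
      have hCpos : 0 < C := by
        have h1 : (0:ℝ) < if e.1 ∈ S then (1:ℝ)/2 else 1/(2*α) := by
          split_ifs <;> positivity
        have h2 : (0:ℝ) < if e.2 ∈ S then (1:ℝ)/2 else 1/(2*α) := by
          split_ifs <;> positivity
        rw [hC]; linarith
      have hXeq : ((if e.1 ∈ S then 1 - divg E yhat e.1 else -(divg E yhat e.1)/α)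
           - (if e.2 ∈ S then 1 - divg E yhat e.2 else -(divg E yhat e.2)/α))
           = xs e.1 - xs e.2 := rfl
      constructor
      · intro hgt
        by_contra hy
        have hlt : yhat e < lam * W e := lt_of_le_of_ne (abs_le.mp (hfeas e he)).2 hy
        have hδpos : 0 < xs e.1 - xs e.2 := sub_pos.mpr hgt
        set t : ℝ := min (lam * W e - yhat e) ((xs e.1 - xs e.2) / (2 * C)) with ht
        have ht0 : 0 < t := lt_min (by linarith) (by positivity)
        have hfeas' : ∀ e' ∈ E, |Function.update yhat e (yhat e + t) e'| ≤ lam * W e' := by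
          intro e' he'
          rcases eq_or_ne e' e with rfl | hne'
          · rw [Function.update_self, abs_le]
            have hlo := (abs_le.mp (hfeas e' he')).1
            have hup : t ≤ lam * W e' - yhat e' := min_le_left _ _
            constructor <;> linarith
          · rw [Function.update_of_ne hne']; exact hfeas e' he'
        have hcontr := hmax _ hfeas'
        rw [nLasso_dual_update_diff E S α hα.ne' yhat e he hne t, hXeq, ← hC] at hcontr
        have hd' : t * (2 * C) ≤ xs e.1 - xs e.2 := by
          have hmr : t ≤ (xs e.1 - xs e.2) / (2 * C) := min_le_right _ _
          calc t * (2*C) ≤ ((xs e.1 - xs e.2) / (2*C)) * (2*C) :=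
                mul_le_mul_of_nonneg_right hmr (by positivity)
            _ = xs e.1 - xs e.2 := by field_simp
        have hkey : t * (t * (2 * C)) ≤ t * (xs e.1 - xs e.2) :=
          mul_le_mul_of_nonneg_left hd' ht0.le
        have htd : 0 < t * (xs e.1 - xs e.2) := mul_pos ht0 hδpos
        nlinarith [hcontr, hkey, htd, mul_pos (mul_pos ht0 ht0) hCpos]
      · intro hlt2
        by_contra hy
        have hgt2 : -(lam * W e) < yhat e :=
          lt_of_le_of_ne (abs_le.mp (hfeas e he)).1 (fun h => hy h.symm)
        have hδneg : xs e.1 - xs e.2 < 0 := sub_neg.mpr hlt2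
        set t : ℝ := max (-(lam * W e) - yhat e) ((xs e.1 - xs e.2) / (2 * C)) with ht
        have ht0 : t < 0 :=
          max_lt (by linarith) (div_neg_of_neg_of_pos hδneg (by positivity))
        have hfeas' : ∀ e' ∈ E, |Function.update yhat e (yhat e + t) e'| ≤ lam * W e' := by
          intro e' he'
          rcases eq_or_ne e' e with rfl | hne'
          · rw [Function.update_self, abs_le]
            have hup := (abs_le.mp (hfeas e' he')).2
            have hlo : -(lam * W e') - yhat e' ≤ t := le_max_left _ _
            constructor <;> linarith
          · rw [Function.update_of_ne hne']; exact hfeas e' he'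
        have hcontr := hmax _ hfeas'
        rw [nLasso_dual_update_diff E S α hα.ne' yhat e he hne t, hXeq, ← hC] at hcontr
        have hd' : xs e.1 - xs e.2 ≤ t * (2 * C) := by
          have hmr : (xs e.1 - xs e.2) / (2 * C) ≤ t := le_max_right _ _
          exact (div_le_iff₀ (by positivity : (0:ℝ) < 2*C)).mp hmr
        have hkey : t * (t * (2 * C)) ≤ t * (xs e.1 - xs e.2) :=
          mul_le_mul_of_nonpos_left hd' ht0.le
        have htd : 0 < t * (xs e.1 - xs e.2) := mul_pos_of_neg_of_neg ht0 hδneg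
        nlinarith [hcontr, hkey, htd, mul_pos (mul_pos_of_neg_of_neg ht0 ht0) hCpos]
    have hxsmin : ∀ z, nLasso E W S α lam xs ≤ nLasso E W S α lam z := by
      intro z
      have heq := nLasso_gap_zero E W S α lam hα xs yhat hsa hsb hsd
      have hwd := nLasso_weak_duality E W S α lam hα z yhat hfeas
      linarith
    have hxx : xhat = xs := nLasso_min_unique E W hW S α lam hα hlam xhat xs hmin hxsmin
    rw [hxx]
    exact ⟨hsa, hsb, hfeas, hsd⟩
  · rintro ⟨ha, hb, hc, hd⟩
    have heq := nLasso_gap_zero E W S α lam hα xhat yhat ha hb hd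
    refine ⟨?_, hc, ?_⟩
    · intro z
      have hwd := nLasso_weak_duality E W S α lam hα z yhat hc
      linarith
    · intro y hy
      have hwd := nLasso_weak_duality E W S α lam hα xhat y hy
      linarith
end

section
/- If x̂ minimizes the nLasso objective h over ℝ^V and ŷ maximizes the dual objective D over all feasible flows, then the flow conservation laws hold: −div_i(ŷ) = x̂_i − 1 for every seed node i ∈ S, and −div_i(ŷ) = α x̂_i for every non-seed node i ∉ S. -/
open Finset

private lemma box_opt_pos (a b G Q : ℝ) (ha : |a| ≤ b) (hQ : 0 ≤ Q) (hG : 0 < G)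
    (h : ∀ t : ℝ, |a + t| ≤ b → t * G ≤ t ^ 2 * Q) : a = b := by
  by_contra hab
  have hab' : a < b := lt_of_le_of_ne (abs_le.mp ha).2 hab
  have hQ1 : (0:ℝ) < Q + 1 := by linarith
  set t := min (b - a) (G / (Q + 1)) with ht
  have ht0 : 0 < t := lt_min (by linarith) (div_pos hG hQ1)
  have hfeas : |a + t| ≤ b := by
    rw [abs_le]
    constructor
    · have := (abs_le.mp ha).1; linarith
    · have : t ≤ b - a := min_le_left _ _; linarith
  have h1 := h t hfeas
  have h2 : t * Q < G := by
    have h3 : t ≤ G / (Q + 1) := min_le_right _ _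
    have h4 : t * Q ≤ G / (Q + 1) * Q := mul_le_mul_of_nonneg_right h3 hQ
    have h5 : G / (Q + 1) * Q < G := by
      rw [div_mul_eq_mul_div, div_lt_iff₀ hQ1]; nlinarith
    linarith
  nlinarith [mul_lt_mul_of_pos_left h2 ht0]

private lemma box_opt_s7 (a b G Q : ℝ) (ha : |a| ≤ b) (hQ : 0 ≤ Q)
    (h : ∀ t : ℝ, |a + t| ≤ b → t * G ≤ t ^ 2 * Q) : a * G = b * |G| := by
  rcases lt_trichotomy G 0 with hG | hG | hG
  · have key : -a = b := by
      refine box_opt_pos (-a) b (-G) Q (by rwa [abs_neg]) hQ (by linarith) ?_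
      intro t hf
      have hf' : |a + (-t)| ≤ b := by
        rw [show a + -t = -(-a + t) by ring, abs_neg]; exact hf
      have := h (-t) hf'
      nlinarith [this]
    rw [abs_of_neg hG]; nlinarith [key]
  · simp [hG]
  · have key := box_opt_pos a b G Q ha hQ hG h
    rw [key, abs_of_pos hG]

private lemma edge_node_sum {n : ℕ} (E : Finset (Fin n × Fin n))
    (y : Fin n × Fin n → ℝ) (x : Fin n → ℝ) :
    ∑ e ∈ E, y e * (x e.1 - x e.2) = ∑ i, divg E y i * x i := by
  have h1 : ∀ f : Fin n × Fin n → Fin n, ∑ e ∈ E, y e * x (f e)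
      = ∑ i, (∑ e ∈ E.filter (fun e => f e = i), y e) * x i := by
    intro f
    rw [← Finset.sum_fiberwise_of_maps_to (fun e _ => Finset.mem_univ (f e))
      (fun e => y e * x (f e))]
    refine Finset.sum_congr rfl fun i _ => ?_
    rw [Finset.sum_mul]
    refine Finset.sum_congr rfl fun e he => ?_
    rw [(Finset.mem_filter.mp he).2]
  calc ∑ e ∈ E, y e * (x e.1 - x e.2)
      = ∑ e ∈ E, y e * x e.1 - ∑ e ∈ E, y e * x e.2 := by
        simp [mul_sub, Finset.sum_sub_distrib]
    _ = ∑ i, (∑ e ∈ E.filter (fun e => e.1 = i), y e) * x i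
        - ∑ i, (∑ e ∈ E.filter (fun e => e.2 = i), y e) * x i := by
        rw [h1 (fun e => e.1), h1 (fun e => e.2)]
    _ = ∑ i, divg E y i * x i := by
        rw [← Finset.sum_sub_distrib]
        refine Finset.sum_congr rfl fun i _ => ?_
        rw [divg, sub_mul]

/-- At a primal-dual optimal pair, the flow conservation laws hold:
`-div_i(ŷ) = x̂_i - 1` on seed nodes and `-div_i(ŷ) = α x̂_i` on non-seed nodes. -/
theorem nLasso_optimal_flow_conservation
    (n : ℕ) (E : Finset (Fin n × Fin n)) (hE : ∀ e ∈ E, e.1 < e.2)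
    (W : Fin n × Fin n → ℝ) (hW : ∀ e ∈ E, 0 < W e)
    (S : Finset (Fin n)) (hS : S.Nonempty)
    (α lam : ℝ) (hα : 0 < α) (hlam : 0 < lam)
    (xhat : Fin n → ℝ) (yhat : Fin n × Fin n → ℝ)
    (hprimal : ∀ z : Fin n → ℝ, nLasso E W S α lam xhat ≤ nLasso E W S α lam z)
    (hfeas : ∀ e ∈ E, |yhat e| ≤ lam * W e)
    (hdual : ∀ y : Fin n × Fin n → ℝ, (∀ e ∈ E, |y e| ≤ lam * W e) →
      dualObj E S α y ≤ dualObj E S α yhat) :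
    (∀ i ∈ S, -divg E yhat i = xhat i - 1) ∧
    (∀ i ∉ S, -divg E yhat i = α * xhat i) := by
  have hα' : α ≠ 0 := hα.ne'
  set d : Fin n → ℝ := fun i => divg E yhat i with hd
  set xs : Fin n → ℝ := fun i => if i ∈ S then 1 - d i else -(d i) / α with hxs
  -- KKT conditions on each edge
  have kkt : ∀ e ∈ E, yhat e * (xs e.1 - xs e.2) = lam * W e * |xs e.1 - xs e.2| := by
    intro e he
    set c : Fin n → ℝ :=
      fun i => (if e.1 = i then (1:ℝ) else 0) - (if e.2 = i then (1:ℝ) else 0) with hc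
    set Q : ℝ := ∑ i ∈ S, c i ^ 2 / 2 + ∑ i ∈ Sᶜ, c i ^ 2 / (2 * α) with hQdef
    have hQ : 0 ≤ Q := by
      rw [hQdef]
      have h1 : (0:ℝ) ≤ ∑ i ∈ S, c i ^ 2 / 2 :=
        Finset.sum_nonneg fun i _ => div_nonneg (sq_nonneg _) (by norm_num)
      have h2 : (0:ℝ) ≤ ∑ i ∈ Sᶜ, c i ^ 2 / (2 * α) :=
        Finset.sum_nonneg fun i _ => div_nonneg (sq_nonneg _) (by linarith)
      linarith
    -- divergence of the perturbed flow
    have hdiv_t : ∀ (t : ℝ) (i : Fin n),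
        divg E (fun e' => yhat e' + t * (if e' = e then 1 else 0)) i = d i + t * c i := by
      intro t i
      have hfil : ∀ f : Fin n × Fin n → Fin n,
          ∑ e' ∈ E.filter (fun e' => f e' = i), (yhat e' + t * (if e' = e then 1 else 0))
          = ∑ e' ∈ E.filter (fun e' => f e' = i), yhat e'
            + t * (if f e = i then 1 else 0) := by
        intro f
        rw [Finset.sum_add_distrib, ← Finset.mul_sum]
        congr 1
        rw [Finset.sum_ite_eq' (E.filter (fun e' => f e' = i)) e (fun _ => (1:ℝ))]
        congr 1
        simp [Finset.mem_filter, he]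
      simp only [divg]
      rw [hfil (fun e' => e'.1), hfil (fun e' => e'.2)]
      simp only [hd, hc, divg]
      ring
    -- the dual objective along the perturbation
    have hDt : ∀ t : ℝ,
        dualObj E S α (fun e' => yhat e' + t * (if e' = e then 1 else 0))
        = dualObj E S α yhat
          + t * (∑ i ∈ S, c i * (1 - d i) + ∑ i ∈ Sᶜ, c i * (-(d i) / α))
          - t ^ 2 * Q := by
      intro t
      rw [dualObj, dualObj]
      simp only [hdiv_t]
      have h1 : ∑ i ∈ S, ((d i + t * c i) ^ 2 / 2 - (d i + t * c i))
          = ∑ i ∈ S, (d i ^ 2 / 2 - d i)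
            - t * ∑ i ∈ S, c i * (1 - d i)
            + t ^ 2 * ∑ i ∈ S, c i ^ 2 / 2 := by
        rw [Finset.mul_sum, Finset.mul_sum, ← Finset.sum_sub_distrib,
          ← Finset.sum_add_distrib]
        refine Finset.sum_congr rfl fun i _ => ?_
        ring
      have h2 : ∑ i ∈ Sᶜ, (d i + t * c i) ^ 2 / (2 * α)
          = ∑ i ∈ Sᶜ, d i ^ 2 / (2 * α)
            - t * ∑ i ∈ Sᶜ, c i * (-(d i) / α)
            + t ^ 2 * ∑ i ∈ Sᶜ, c i ^ 2 / (2 * α) := by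
        rw [Finset.mul_sum, Finset.mul_sum, ← Finset.sum_sub_distrib,
          ← Finset.sum_add_distrib]
        refine Finset.sum_congr rfl fun i _ => ?_
        field_simp
        ring
      rw [h1, h2, hQdef]
      ring
    -- identify the linear coefficient with xs e.1 - xs e.2
    have hGeq : ∑ i ∈ S, c i * (1 - d i) + ∑ i ∈ Sᶜ, c i * (-(d i) / α)
        = xs e.1 - xs e.2 := by
      have e1 : ∑ i ∈ S, c i * (1 - d i) = ∑ i ∈ S, c i * xs i :=
        Finset.sum_congr rfl fun i hi => by simp [hxs, hi]
      have e2 : ∑ i ∈ Sᶜ, c i * (-(d i) / α) = ∑ i ∈ Sᶜ, c i * xs i :=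
        Finset.sum_congr rfl fun i hi => by
          simp [hxs, Finset.mem_compl.mp hi]
      rw [e1, e2, Finset.sum_add_sum_compl S (fun i => c i * xs i)]
      have : ∀ i, c i * xs i
          = (if e.1 = i then xs i else 0) - (if e.2 = i then xs i else 0) := by
        intro i
        simp only [hc]
        split_ifs <;> ring
      simp only [this]
      rw [Finset.sum_sub_distrib, Finset.sum_ite_eq Finset.univ e.1 xs,
        Finset.sum_ite_eq Finset.univ e.2 xs]
      simp
    -- box optimality inequality
    have hbox : ∀ t : ℝ, |yhat e + t| ≤ lam * W e →
        t * (xs e.1 - xs e.2) ≤ t ^ 2 * Q := by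
      intro t hf
      have hfeas' : ∀ e' ∈ E, |yhat e' + t * (if e' = e then 1 else 0)| ≤ lam * W e' := by
        intro e' he'
        by_cases h : e' = e
        · subst h; simpa using hf
        · simpa [h] using hfeas e' he'
      have := hdual _ hfeas'
      rw [hDt t, hGeq] at this
      linarith
    exact box_opt_s7 (yhat e) (lam * W e) (xs e.1 - xs e.2) Q (hfeas e he) hQ hbox
  -- Lagrangian identity
  have hL : ∀ x : Fin n → ℝ,
      ∑ i ∈ S, (x i - 1) ^ 2 / 2 + ∑ i ∈ Sᶜ, α * x i ^ 2 / 2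
        + ∑ e ∈ E, yhat e * (x e.1 - x e.2)
      = (∑ i ∈ S, (x i - xs i) ^ 2 / 2 + ∑ i ∈ Sᶜ, α * (x i - xs i) ^ 2 / 2)
        + dualObj E S α yhat := by
    intro x
    have hdeq : ∀ i, divg E yhat i = d i := fun i => rfl
    rw [edge_node_sum E yhat x]
    have hsplit : ∑ i, divg E yhat i * x i
        = ∑ i ∈ S, d i * x i + ∑ i ∈ Sᶜ, d i * x i := by
      rw [Finset.sum_add_sum_compl S (fun i => d i * x i)]
    have h1 : ∑ i ∈ S, (x i - 1) ^ 2 / 2 + ∑ i ∈ S, d i * x i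
        = ∑ i ∈ S, (x i - xs i) ^ 2 / 2 - ∑ i ∈ S, (d i ^ 2 / 2 - d i) := by
      rw [← Finset.sum_add_distrib, ← Finset.sum_sub_distrib]
      refine Finset.sum_congr rfl fun i hi => ?_
      have hx : xs i = 1 - d i := by simp [hxs, hi]
      rw [hx]; ring
    have h2 : ∑ i ∈ Sᶜ, α * x i ^ 2 / 2 + ∑ i ∈ Sᶜ, d i * x i
        = ∑ i ∈ Sᶜ, α * (x i - xs i) ^ 2 / 2 - ∑ i ∈ Sᶜ, d i ^ 2 / (2 * α) := by
      rw [← Finset.sum_add_distrib, ← Finset.sum_sub_distrib]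
      refine Finset.sum_congr rfl fun i hi => ?_
      have hx : xs i = -(d i) / α := by simp [hxs, Finset.mem_compl.mp hi]
      rw [hx]
      field_simp
      ring
    rw [hsplit, dualObj]
    simp only [hdeq]
    linarith [h1, h2]
  -- weak duality inequality for xhat
  have ha : ∑ i ∈ S, (xhat i - 1) ^ 2 / 2 + ∑ i ∈ Sᶜ, α * xhat i ^ 2 / 2
      + ∑ e ∈ E, yhat e * (xhat e.1 - xhat e.2) ≤ nLasso E W S α lam xhat := by
    rw [nLasso, TV, Finset.mul_sum]
    have : ∑ e ∈ E, yhat e * (xhat e.1 - xhat e.2)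
        ≤ ∑ e ∈ E, lam * (W e * |xhat e.1 - xhat e.2|) := by
      refine Finset.sum_le_sum fun e he => ?_
      calc yhat e * (xhat e.1 - xhat e.2) ≤ |yhat e * (xhat e.1 - xhat e.2)| :=
            le_abs_self _
        _ = |yhat e| * |xhat e.1 - xhat e.2| := abs_mul _ _
        _ ≤ lam * W e * |xhat e.1 - xhat e.2| :=
            mul_le_mul_of_nonneg_right (hfeas e he) (abs_nonneg _)
        _ = lam * (W e * |xhat e.1 - xhat e.2|) := by ring
    linarith
  -- tightness at xs
  have hb : nLasso E W S α lam xs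
      = ∑ i ∈ S, (xs i - 1) ^ 2 / 2 + ∑ i ∈ Sᶜ, α * xs i ^ 2 / 2
        + ∑ e ∈ E, yhat e * (xs e.1 - xs e.2) := by
    rw [nLasso, TV, Finset.mul_sum]
    congr 1
    refine Finset.sum_congr rfl fun e he => ?_
    rw [kkt e he]; ring
  -- equality chain
  have hxs_val : nLasso E W S α lam xs = dualObj E S α yhat := by
    rw [hb, hL xs]; simp
  have hchain : (∑ i ∈ S, (xhat i - xs i) ^ 2 / 2
      + ∑ i ∈ Sᶜ, α * (xhat i - xs i) ^ 2 / 2) ≤ 0 := by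
    have c1 := hprimal xs
    have c2 := hL xhat
    rw [hxs_val] at c1
    linarith [ha, c2, c1]
  have hnn1 : ∀ i ∈ S, (0:ℝ) ≤ (xhat i - xs i) ^ 2 / 2 :=
    fun i _ => div_nonneg (sq_nonneg _) (by norm_num)
  have hnn2 : ∀ i ∈ Sᶜ, (0:ℝ) ≤ α * (xhat i - xs i) ^ 2 / 2 :=
    fun i _ => div_nonneg (mul_nonneg hα.le (sq_nonneg _)) (by norm_num)
  have hz1 : ∀ i ∈ S, (xhat i - xs i) ^ 2 / 2 = 0 := by
    rw [← Finset.sum_eq_zero_iff_of_nonneg hnn1]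
    have s1 := Finset.sum_nonneg hnn1
    have s2 := Finset.sum_nonneg hnn2
    linarith
  have hz2 : ∀ i ∈ Sᶜ, α * (xhat i - xs i) ^ 2 / 2 = 0 := by
    rw [← Finset.sum_eq_zero_iff_of_nonneg hnn2]
    have s1 := Finset.sum_nonneg hnn1
    have s2 := Finset.sum_nonneg hnn2
    linarith
  have hdeq : ∀ i, divg E yhat i = d i := fun i => rfl
  constructor
  · intro i hi
    have hz := hz1 i hi
    have hsq : (xhat i - xs i) ^ 2 = 0 := by linarith
    have h0 : xhat i - xs i = 0 := pow_eq_zero_iff two_ne_zero |>.mp hsq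
    have hx : xs i = 1 - d i := by simp [hxs, hi]
    rw [hdeq i]
    linarith [h0, hx.symm ▸ h0]
  · intro i hi
    have hz := hz2 i (Finset.mem_compl.mpr hi)
    have h2 : α * (xhat i - xs i) ^ 2 = 0 := by linarith
    have hsq : (xhat i - xs i) ^ 2 = 0 := (mul_eq_zero.mp h2).resolve_left hα'
    have h0 : xhat i - xs i = 0 := pow_eq_zero_iff two_ne_zero |>.mp hsq
    have hx : xs i = -(d i) / α := by simp [hxs, hi]
    have h3 : xhat i = -(d i) / α := by rw [← hx]; linarith
    rw [hdeq i, h3]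
    field_simp
end

section
/- If x̂ minimizes the nLasso objective h over ℝ^V and ŷ maximizes the dual objective D over all feasible flows, then |ŷ_e| ≤ λ W_e for every edge e ∈ E, and for every oriented edge e = (i,j) ∈ E with |ŷ_e| < λ W_e it holds that x̂_i = x̂_j. -/
open Finset

/- ### Auxiliary material -/

/-- The candidate primal optimum read off from a flow `y`. -/
noncomputable def xtil {n : ℕ} (E : Finset (Fin n × Fin n)) (S : Finset (Fin n))
    (α : ℝ) (y : Fin n × Fin n → ℝ) (i : Fin n) : ℝ :=
  if i ∈ S then 1 - divg E y i else -divg E y i / α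

/-- Signed incidence of edge `e0` at node `i`. -/
noncomputable def cfun {n : ℕ} (e0 : Fin n × Fin n) (i : Fin n) : ℝ :=
  (if e0.1 = i then (1 : ℝ) else 0) - (if e0.2 = i then (1 : ℝ) else 0)

/-- Curvature constant for perturbing edge `e0`. -/
noncomputable def Qval {n : ℕ} (S : Finset (Fin n)) (α : ℝ) (e0 : Fin n × Fin n) : ℝ :=
  ∑ i ∈ S, cfun e0 i ^ 2 / 2 + ∑ i ∈ Sᶜ, cfun e0 i ^ 2 / (2 * α)

lemma Qval_nonneg {n : ℕ} (S : Finset (Fin n)) {α : ℝ} (hα : 0 < α) (e0 : Fin n × Fin n) :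
    0 ≤ Qval S α e0 := by
  unfold Qval
  have h1 : (0:ℝ) ≤ ∑ i ∈ S, cfun e0 i ^ 2 / 2 :=
    Finset.sum_nonneg fun i _ => by positivity
  have h2 : (0:ℝ) ≤ ∑ i ∈ Sᶜ, cfun e0 i ^ 2 / (2 * α) :=
    Finset.sum_nonneg fun i _ => by positivity
  linarith

/-- A quadratic with positive slope at the origin cannot stay below zero on a
positive interval. -/
lemma no_pos_slope {D Q slack : ℝ} (hD : 0 < D) (hQ : 0 ≤ Q) (hslack : 0 < slack)
    (h : ∀ t : ℝ, 0 < t → t ≤ slack → t * D ≤ t ^ 2 * Q) : False := by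
  have hden : (0:ℝ) < 2 * Q + 2 := by linarith
  have ht0 : 0 < min slack (D / (2 * Q + 2)) := lt_min hslack (div_pos hD hden)
  have h1 := h _ ht0 (min_le_left _ _)
  have h2 : min slack (D / (2 * Q + 2)) ≤ D / (2 * Q + 2) := min_le_right _ _
  have h3 : min slack (D / (2 * Q + 2)) * Q ≤ (D / (2 * Q + 2)) * Q :=
    mul_le_mul_of_nonneg_right h2 hQ
  have h4 : (D / (2 * Q + 2)) * Q < D := by
    rw [div_mul_eq_mul_div, div_lt_iff₀ hden]
    nlinarith
  have h5 : min slack (D / (2 * Q + 2)) * Q < D := lt_of_le_of_lt h3 h4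
  have h6 := mul_lt_mul_of_pos_left h5 ht0
  nlinarith [h1, h6]

/-- Divergence of the flow perturbed on a single edge. -/
lemma divg_perturb {n : ℕ} (E : Finset (Fin n × Fin n)) (y : Fin n × Fin n → ℝ)
    (e0 : Fin n × Fin n) (he0 : e0 ∈ E) (t : ℝ) (i : Fin n) :
    divg E (fun e => y e + if e = e0 then t else 0) i = divg E y i + t * cfun e0 i := by
  classical
  unfold divg
  rw [Finset.sum_add_distrib, Finset.sum_add_distrib]
  rw [Finset.sum_ite_eq' (E.filter (fun e => e.1 = i)) e0 (fun _ => t),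
      Finset.sum_ite_eq' (E.filter (fun e => e.2 = i)) e0 (fun _ => t)]
  simp only [Finset.mem_filter, he0, true_and]
  unfold cfun
  by_cases h1 : e0.1 = i <;> by_cases h2 : e0.2 = i <;> simp [h1, h2] <;> ring

/-- The dual objective of the perturbed flow. -/
lemma dualObj_perturb {n : ℕ} (E : Finset (Fin n × Fin n)) (S : Finset (Fin n))
    {α : ℝ} (hα : α ≠ 0) (y : Fin n × Fin n → ℝ)
    (e0 : Fin n × Fin n) (he0 : e0 ∈ E) (t : ℝ) :
    dualObj E S α (fun e => y e + if e = e0 then t else 0)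
      = dualObj E S α y + t * (xtil E S α y e0.1 - xtil E S α y e0.2)
        - t ^ 2 * Qval S α e0 := by
  classical
  have hdiv := divg_perturb E y e0 he0 t
  unfold dualObj
  simp only [hdiv]
  have hS1 : ∑ i ∈ S, ((divg E y i + t * cfun e0 i) ^ 2 / 2 - (divg E y i + t * cfun e0 i))
      = ∑ i ∈ S, (divg E y i ^ 2 / 2 - divg E y i)
        - t * ∑ i ∈ S, cfun e0 i * xtil E S α y i
        + t ^ 2 * ∑ i ∈ S, cfun e0 i ^ 2 / 2 := by
    rw [Finset.mul_sum, Finset.mul_sum, ← Finset.sum_sub_distrib, ← Finset.sum_add_distrib]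
    refine Finset.sum_congr rfl fun i hi => ?_
    have hx : xtil E S α y i = 1 - divg E y i := by simp [xtil, hi]
    rw [hx]; ring
  have hS2 : ∑ i ∈ Sᶜ, (divg E y i + t * cfun e0 i) ^ 2 / (2 * α)
      = ∑ i ∈ Sᶜ, divg E y i ^ 2 / (2 * α)
        - t * ∑ i ∈ Sᶜ, cfun e0 i * xtil E S α y i
        + t ^ 2 * ∑ i ∈ Sᶜ, cfun e0 i ^ 2 / (2 * α) := by
    rw [Finset.mul_sum, Finset.mul_sum, ← Finset.sum_sub_distrib, ← Finset.sum_add_distrib]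
    refine Finset.sum_congr rfl fun i hi => ?_
    have hi' : i ∉ S := Finset.mem_compl.mp hi
    have hx : xtil E S α y i = -divg E y i / α := by simp [xtil, hi']
    rw [hx]; field_simp; ring
  have hsum : ∑ i ∈ S, cfun e0 i * xtil E S α y i
      + ∑ i ∈ Sᶜ, cfun e0 i * xtil E S α y i
      = xtil E S α y e0.1 - xtil E S α y e0.2 := by
    rw [Finset.sum_add_sum_compl]
    have hpt : ∀ i, cfun e0 i * xtil E S α y i
        = (if e0.1 = i then xtil E S α y i else 0)
          - (if e0.2 = i then xtil E S α y i else 0) := by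
      intro i
      unfold cfun
      by_cases h1 : e0.1 = i <;> by_cases h2 : e0.2 = i <;> simp [h1, h2]
    simp only [hpt, Finset.sum_sub_distrib, Fintype.sum_ite_eq]
  rw [hS1, hS2, ← hsum]
  unfold Qval
  ring

/-- Summation by parts: pairing a flow with edge differences equals pairing
divergence with node values. -/
lemma flow_pairing {n : ℕ} (E : Finset (Fin n × Fin n)) (y : Fin n × Fin n → ℝ)
    (z : Fin n → ℝ) :
    ∑ i, z i * divg E y i = ∑ e ∈ E, y e * (z e.1 - z e.2) := by
  classical
  unfold divg
  have h1 : ∑ i, ∑ e ∈ E.filter (fun e => e.1 = i), z i * y e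
      = ∑ e ∈ E, z e.1 * y e := by
    rw [← Finset.sum_fiberwise E (fun e => e.1) (fun e => z e.1 * y e)]
    refine Finset.sum_congr rfl fun i _ => Finset.sum_congr rfl fun e he => ?_
    rw [(Finset.mem_filter.mp he).2]
  have h2 : ∑ i, ∑ e ∈ E.filter (fun e => e.2 = i), z i * y e
      = ∑ e ∈ E, z e.2 * y e := by
    rw [← Finset.sum_fiberwise E (fun e => e.2) (fun e => z e.2 * y e)]
    refine Finset.sum_congr rfl fun i _ => Finset.sum_congr rfl fun e he => ?_
    rw [(Finset.mem_filter.mp he).2]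
  calc ∑ i, z i * (∑ e ∈ E.filter (fun e => e.1 = i), y e
        - ∑ e ∈ E.filter (fun e => e.2 = i), y e)
      = ∑ i, (∑ e ∈ E.filter (fun e => e.1 = i), z i * y e
        - ∑ e ∈ E.filter (fun e => e.2 = i), z i * y e) := by
        refine Finset.sum_congr rfl fun i _ => ?_
        rw [mul_sub, Finset.mul_sum, Finset.mul_sum]
    _ = ∑ e ∈ E, z e.1 * y e - ∑ e ∈ E, z e.2 * y e := by
        rw [Finset.sum_sub_distrib, h1, h2]
    _ = ∑ e ∈ E, y e * (z e.1 - z e.2) := by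
        rw [← Finset.sum_sub_distrib]
        exact Finset.sum_congr rfl fun e _ => by ring

/-- Exact primal-dual gap decomposition. -/
lemma gap_decomp {n : ℕ} (E : Finset (Fin n × Fin n)) (W : Fin n × Fin n → ℝ)
    (S : Finset (Fin n)) {α : ℝ} (hα : α ≠ 0) (lam : ℝ)
    (y : Fin n × Fin n → ℝ) (z : Fin n → ℝ) :
    nLasso E W S α lam z = dualObj E S α y
      + (∑ i ∈ S, (z i - xtil E S α y i) ^ 2 / 2
        + ∑ i ∈ Sᶜ, α * (z i - xtil E S α y i) ^ 2 / 2)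
      + ∑ e ∈ E, (lam * W e * |z e.1 - z e.2| - y e * (z e.1 - z e.2)) := by
  classical
  have hpair := flow_pairing E y z
  have hsplit : ∑ i, z i * divg E y i
      = ∑ i ∈ S, z i * divg E y i + ∑ i ∈ Sᶜ, z i * divg E y i :=
    (Finset.sum_add_sum_compl S _).symm
  have hS1 : ∑ i ∈ S, (z i - 1) ^ 2 / 2
      = ∑ i ∈ S, ((z i - xtil E S α y i) ^ 2 / 2
          - (divg E y i ^ 2 / 2 - divg E y i) - z i * divg E y i) := by
    refine Finset.sum_congr rfl fun i hi => ?_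
    have hx : xtil E S α y i = 1 - divg E y i := by simp [xtil, hi]
    rw [hx]; ring
  have hS2 : ∑ i ∈ Sᶜ, α * z i ^ 2 / 2
      = ∑ i ∈ Sᶜ, (α * (z i - xtil E S α y i) ^ 2 / 2
          - divg E y i ^ 2 / (2 * α) - z i * divg E y i) := by
    refine Finset.sum_congr rfl fun i hi => ?_
    have hi' : i ∉ S := Finset.mem_compl.mp hi
    have hx : xtil E S α y i = -divg E y i / α := by simp [xtil, hi']
    rw [hx]; field_simp; ring
  have hTV : lam * TV E W z
      = ∑ e ∈ E, (lam * W e * |z e.1 - z e.2| - y e * (z e.1 - z e.2))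
        + (∑ i ∈ S, z i * divg E y i + ∑ i ∈ Sᶜ, z i * divg E y i) := by
    calc lam * TV E W z = ∑ e ∈ E, lam * (W e * |z e.1 - z e.2|) := by
          unfold TV; rw [Finset.mul_sum]
      _ = ∑ e ∈ E, ((lam * W e * |z e.1 - z e.2| - y e * (z e.1 - z e.2))
            + y e * (z e.1 - z e.2)) :=
          Finset.sum_congr rfl fun e _ => by ring
      _ = ∑ e ∈ E, (lam * W e * |z e.1 - z e.2| - y e * (z e.1 - z e.2))
            + ∑ e ∈ E, y e * (z e.1 - z e.2) := Finset.sum_add_distrib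
      _ = _ := by rw [← hpair, hsplit]
  unfold nLasso dualObj
  rw [hS1, hS2, hTV]
  simp only [Finset.sum_sub_distrib]
  ring

/-- Key stationarity inequality from dual optimality. -/
lemma dual_stationarity {n : ℕ} (E : Finset (Fin n × Fin n)) (S : Finset (Fin n))
    (W : Fin n × Fin n → ℝ) {α lam : ℝ} (hα : α ≠ 0)
    (yhat : Fin n × Fin n → ℝ)
    (hfeas : ∀ e ∈ E, |yhat e| ≤ lam * W e)
    (hdual : ∀ y : Fin n × Fin n → ℝ, (∀ e ∈ E, |y e| ≤ lam * W e) →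
      dualObj E S α y ≤ dualObj E S α yhat)
    (e0 : Fin n × Fin n) (he0 : e0 ∈ E) (t : ℝ) (ht : |yhat e0 + t| ≤ lam * W e0) :
    t * (xtil E S α yhat e0.1 - xtil E S α yhat e0.2) ≤ t ^ 2 * Qval S α e0 := by
  classical
  have hfeas' : ∀ e ∈ E, |(fun e => yhat e + if e = e0 then t else 0) e| ≤ lam * W e := by
    intro e he
    by_cases h : e = e0
    · subst h; simpa using ht
    · simpa [h] using hfeas e he
  have h := hdual _ hfeas'
  rw [dualObj_perturb E S hα yhat e0 he0 t] at h
  linarith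

/-- At a primal-dual optimal pair, the capacity constraints hold and the
primal solution is constant across non-saturated edges. -/
theorem nLasso_optimal_capacity_and_nonsaturated
    (n : ℕ) (E : Finset (Fin n × Fin n)) (hE : ∀ e ∈ E, e.1 < e.2)
    (W : Fin n × Fin n → ℝ) (hW : ∀ e ∈ E, 0 < W e)
    (S : Finset (Fin n)) (hS : S.Nonempty)
    (α lam : ℝ) (hα : 0 < α) (hlam : 0 < lam)
    (xhat : Fin n → ℝ) (yhat : Fin n × Fin n → ℝ)
    (hprimal : ∀ z : Fin n → ℝ, nLasso E W S α lam xhat ≤ nLasso E W S α lam z)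
    (hfeas : ∀ e ∈ E, |yhat e| ≤ lam * W e)
    (hdual : ∀ y : Fin n × Fin n → ℝ, (∀ e ∈ E, |y e| ≤ lam * W e) →
      dualObj E S α y ≤ dualObj E S α yhat) :
    (∀ e ∈ E, |yhat e| ≤ lam * W e) ∧
    (∀ e ∈ E, |yhat e| < lam * W e → xhat e.1 = xhat e.2) := by
  classical
  refine ⟨hfeas, ?_⟩
  have hkey : ∀ e0 ∈ E, ∀ t : ℝ, |yhat e0 + t| ≤ lam * W e0 →
      t * (xtil E S α yhat e0.1 - xtil E S α yhat e0.2) ≤ t ^ 2 * Qval S α e0 :=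
    fun e0 he0 t ht => dual_stationarity E S W (ne_of_gt hα) yhat hfeas hdual e0 he0 t ht
  -- slack above forces the difference to be ≤ 0
  have hup : ∀ e0 ∈ E, yhat e0 < lam * W e0 →
      xtil E S α yhat e0.1 - xtil E S α yhat e0.2 ≤ 0 := by
    intro e0 he0 hy
    by_contra hpos
    push_neg at hpos
    refine no_pos_slope hpos (Qval_nonneg S hα e0) (show (0:ℝ) < lam * W e0 - yhat e0 by linarith)
      (fun t ht hts => ?_)
    refine hkey e0 he0 t ?_
    have hlb := (abs_le.mp (hfeas e0 he0)).1
    rw [abs_le]; constructor <;> linarith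
  -- slack below forces the difference to be ≥ 0
  have hdn : ∀ e0 ∈ E, -(lam * W e0) < yhat e0 →
      0 ≤ xtil E S α yhat e0.1 - xtil E S α yhat e0.2 := by
    intro e0 he0 hy
    by_contra hneg
    push_neg at hneg
    refine no_pos_slope (show (0:ℝ) < -(xtil E S α yhat e0.1 - xtil E S α yhat e0.2) by linarith)
      (Qval_nonneg S hα e0) (show (0:ℝ) < yhat e0 + lam * W e0 by linarith)
      (fun s hs hss => ?_)
    have habs : |yhat e0 + (-s)| ≤ lam * W e0 := by
      have hub := (abs_le.mp (hfeas e0 he0)).2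
      rw [abs_le]; constructor <;> linarith
    have h := hkey e0 he0 (-s) habs
    nlinarith [h]
  -- tightness on every edge
  have htight : ∀ e ∈ E, yhat e * (xtil E S α yhat e.1 - xtil E S α yhat e.2)
      = lam * W e * |xtil E S α yhat e.1 - xtil E S α yhat e.2| := by
    intro e he
    rcases lt_trichotomy (xtil E S α yhat e.1 - xtil E S α yhat e.2) 0 with hlt | heq | hgt
    · have h1 : ¬ (-(lam * W e) < yhat e) := fun h => absurd (hdn e he h) (by linarith)
      push_neg at h1
      have hlb := (abs_le.mp (hfeas e he)).1
      have hy : yhat e = -(lam * W e) := le_antisymm h1 hlb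
      rw [hy, abs_of_neg hlt]; ring
    · rw [heq]; simp
    · have h1 : ¬ (yhat e < lam * W e) := fun h => absurd (hup e he h) (by linarith)
      push_neg at h1
      have hub := (abs_le.mp (hfeas e he)).2
      have hy : yhat e = lam * W e := le_antisymm hub h1
      rw [hy, abs_of_pos hgt]
  -- strong duality: nLasso (xtil …) = dualObj yhat
  have hgap_xt := gap_decomp E W S (ne_of_gt hα) lam yhat (xtil E S α yhat)
  have hzero : ∑ e ∈ E, (lam * W e * |xtil E S α yhat e.1 - xtil E S α yhat e.2|
      - yhat e * (xtil E S α yhat e.1 - xtil E S α yhat e.2)) = 0 := by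
    refine Finset.sum_eq_zero fun e he => ?_
    have := htight e he
    linarith
  have hxt_eq : nLasso E W S α lam (xtil E S α yhat) = dualObj E S α yhat := by
    rw [hgap_xt, hzero]
    simp
  -- weak duality terms at xhat
  have hgap_xh := gap_decomp E W S (ne_of_gt hα) lam yhat xhat
  have hA1 : (0:ℝ) ≤ ∑ i ∈ S, (xhat i - xtil E S α yhat i) ^ 2 / 2 :=
    Finset.sum_nonneg fun i _ => by positivity
  have hA2 : (0:ℝ) ≤ ∑ i ∈ Sᶜ, α * (xhat i - xtil E S α yhat i) ^ 2 / 2 :=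
    Finset.sum_nonneg fun i _ => by positivity
  have hB : (0:ℝ) ≤ ∑ e ∈ E, (lam * W e * |xhat e.1 - xhat e.2|
      - yhat e * (xhat e.1 - xhat e.2)) := by
    refine Finset.sum_nonneg fun e he => ?_
    have h1 : yhat e * (xhat e.1 - xhat e.2) ≤ |yhat e| * |xhat e.1 - xhat e.2| := by
      calc yhat e * (xhat e.1 - xhat e.2) ≤ |yhat e * (xhat e.1 - xhat e.2)| := le_abs_self _
        _ = |yhat e| * |xhat e.1 - xhat e.2| := abs_mul _ _
    have h2 : |yhat e| * |xhat e.1 - xhat e.2| ≤ lam * W e * |xhat e.1 - xhat e.2| :=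
      mul_le_mul_of_nonneg_right (hfeas e he) (abs_nonneg _)
    linarith
  have hopt := hprimal (xtil E S α yhat)
  rw [hxt_eq, hgap_xh] at hopt
  -- the nonnegative terms vanish
  have hA1z : ∑ i ∈ S, (xhat i - xtil E S α yhat i) ^ 2 / 2 = 0 := by linarith
  have hA2z : ∑ i ∈ Sᶜ, α * (xhat i - xtil E S α yhat i) ^ 2 / 2 = 0 := by linarith
  have hxeq : ∀ i, xhat i = xtil E S α yhat i := by
    intro i
    by_cases hi : i ∈ S
    · have h0 := (Finset.sum_eq_zero_iff_of_nonneg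
        (fun j _ => by positivity : ∀ j ∈ S, (0:ℝ) ≤ (xhat j - xtil E S α yhat j) ^ 2 / 2)).mp
        hA1z i hi
      have h2 : (xhat i - xtil E S α yhat i) ^ 2 = 0 := by linarith
      have h3 := pow_eq_zero_iff (n := 2) (by norm_num) |>.mp h2
      linarith [sub_eq_zero.mp h3, h3, sub_eq_zero.mp h3]
    · have hi' : i ∈ Sᶜ := Finset.mem_compl.mpr hi
      have h0 := (Finset.sum_eq_zero_iff_of_nonneg
        (fun j _ => by positivity :
          ∀ j ∈ Sᶜ, (0:ℝ) ≤ α * (xhat j - xtil E S α yhat j) ^ 2 / 2)).mp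
        hA2z i hi'
      have h2 : (xhat i - xtil E S α yhat i) ^ 2 = 0 := by nlinarith
      have h3 := pow_eq_zero_iff (n := 2) (by norm_num) |>.mp h2
      linarith [sub_eq_zero.mp h3]
  -- conclusion for non-saturated edges
  intro e he hlt
  have h1 : yhat e < lam * W e := lt_of_le_of_lt (le_abs_self _) hlt
  have h2 : -(lam * W e) < yhat e := by
    have := neg_abs_le (yhat e); linarith
  have hle := hup e he h1
  have hge := hdn e he h2
  have hz : xtil E S α yhat e.1 = xtil E S α yhat e.2 := by linarith
  rw [hxeq e.1, hxeq e.2, hz]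
end

section
/- Let x̂ minimize the nLasso objective h over ℝ^V, let C = {i ∈ V : x̂_i > 1/2} be the thresholded cluster, and assume S ⊆ C. Then the weighted boundary of C satisfies the exact identity λ Σ_{e∈∂C} W_e = α Σ_{i∉C} x̂_i. -/
open Finset

lemma quad_nonneg_zero (A B δ : ℝ) (hδ : 0 < δ) (hB : 0 ≤ B)
    (h : ∀ t : ℝ, |t| < δ → 0 ≤ t * A + t ^ 2 * B) : A = 0 := by
  by_contra hA
  have habs : 0 < |A| := abs_pos.2 hA
  set s : ℝ := min (δ / 2) (|A| / (2 * B + 2)) with hs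
  have hs0 : 0 < s := lt_min (by linarith) (div_pos habs (by linarith))
  have hsδ : |s| < δ := by
    rw [abs_of_pos hs0]; exact lt_of_le_of_lt (min_le_left _ _) (by linarith)
  have hsneg : |(-s)| < δ := by rwa [abs_neg]
  have h1 := h s hsδ
  have h2 := h (-s) hsneg
  have h2' : 0 ≤ -(s * A) + s ^ 2 * B := by nlinarith [h2]
  have hsA : s * |A| ≤ s ^ 2 * B := by
    rcases abs_cases A with ⟨hc, _⟩ | ⟨hc, _⟩
    · rw [hc]; linarith
    · rw [hc]; nlinarith
  have hsb : s ≤ |A| / (2 * B + 2) := min_le_right _ _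
  have hsbound : s * (2 * B + 2) ≤ |A| := by
    calc s * (2 * B + 2) ≤ (|A| / (2 * B + 2)) * (2 * B + 2) := by nlinarith
    _ = |A| := div_mul_cancel₀ _ (by linarith)
  nlinarith [mul_le_mul_of_nonneg_left hsbound hs0.le, mul_pos hs0 hs0]

/-- For the thresholded cluster `C = {i : x̂_i > 1/2}` of a nLasso minimizer
with `S ⊆ C`, the weighted boundary satisfies `λ ∑_{e∈∂C} W_e = α ∑_{i∉C} x̂_i`. -/
theorem weighted_boundary_eq_outside_mass
    (n : ℕ) (E : Finset (Fin n × Fin n)) (hE : ∀ e ∈ E, e.1 < e.2)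
    (W : Fin n × Fin n → ℝ) (hW : ∀ e ∈ E, 0 < W e)
    (S : Finset (Fin n)) (hS : S.Nonempty)
    (α lam : ℝ) (hα : 0 < α) (hlam : 0 < lam)
    (xhat : Fin n → ℝ)
    (hprimal : ∀ z : Fin n → ℝ, nLasso E W S α lam xhat ≤ nLasso E W S α lam z)
    (C : Finset (Fin n)) (hC : C = Finset.univ.filter (fun i => 1 / 2 < xhat i))
    (hSC : S ⊆ C) :
    lam * ∑ e ∈ bdry E C, W e = α * ∑ i ∈ Cᶜ, xhat i := by
  have hmem : ∀ i, i ∈ C ↔ 1 / 2 < xhat i := by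
    intro i; rw [hC]; simp
  -- gap positivity on boundary edges
  have hgap : ∀ e ∈ bdry E C, 0 < |xhat e.1 - xhat e.2| := by
    intro e he
    rcases Finset.mem_filter.1 he with ⟨_, hcase⟩
    rcases hcase with ⟨h1, h2⟩ | ⟨h1, h2⟩
    · have h1' : 1 / 2 < xhat e.1 := (hmem _).1 h1
      have h2' : ¬ (1 / 2 < xhat e.2) := fun h => h2 ((hmem _).2 h)
      push_neg at h2'
      rw [abs_of_pos (by linarith)]; linarith
    · have h2' : 1 / 2 < xhat e.2 := (hmem _).1 h2
      have h1' : ¬ (1 / 2 < xhat e.1) := fun h => h1 ((hmem _).2 h)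
      push_neg at h1'
      rw [abs_of_neg (by linarith)]; linarith
  -- δ: a uniform positive lower bound on boundary gaps
  set D : Finset ℝ := insert (1 : ℝ) ((bdry E C).image (fun e => |xhat e.1 - xhat e.2|)) with hD
  have hDne : D.Nonempty := Finset.insert_nonempty _ _
  set δ : ℝ := D.min' hDne with hδdef
  have hδpos : 0 < δ := by
    have hminmem := Finset.min'_mem D hDne
    rw [← hδdef] at hminmem
    rw [hD] at hminmem
    rcases Finset.mem_insert.1 hminmem with h | h
    · rw [h]; norm_num
    · rcases Finset.mem_image.1 h with ⟨e, he, hh⟩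
      rw [← hh]; exact hgap e he
  have hδle : ∀ e ∈ bdry E C, δ ≤ |xhat e.1 - xhat e.2| := by
    intro e he
    apply Finset.min'_le
    rw [hD]
    exact Finset.mem_insert_of_mem (Finset.mem_image_of_mem _ he)
  -- the perturbed signal
  set z : ℝ → (Fin n → ℝ) := fun t i => if i ∈ C then xhat i else xhat i + t with hz
  have hsubc : Cᶜ ⊆ Sᶜ := Finset.compl_subset_compl.mpr hSC
  have hbsub : bdry E C ⊆ E := Finset.filter_subset _ _
  set SW : ℝ := ∑ e ∈ bdry E C, W e with hSW
  set SX : ℝ := ∑ i ∈ Cᶜ, xhat i with hSX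
  have hcomp : ∀ t : ℝ, |t| < δ →
      nLasso E W S α lam (z t) =
        nLasso E W S α lam xhat + t * (α * SX - lam * SW)
          + t ^ 2 * (α * (Cᶜ.card : ℝ) / 2) := by
    intro t ht
    have htle : ∀ e ∈ bdry E C, t < |xhat e.1 - xhat e.2| :=
      fun e he => lt_of_le_of_lt (le_abs_self t) (lt_of_lt_of_le ht (hδle e he))
    -- term 1
    have h1 : ∑ i ∈ S, (z t i - 1) ^ 2 / 2 = ∑ i ∈ S, (xhat i - 1) ^ 2 / 2 := by
      refine Finset.sum_congr rfl fun i hi => ?_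
      have : i ∈ C := hSC hi
      simp [hz, this]
    -- term 2
    have h2 : ∑ i ∈ Sᶜ, α * (z t i) ^ 2 / 2 =
        ∑ i ∈ Sᶜ, α * (xhat i) ^ 2 / 2 + t * (α * SX)
          + t ^ 2 * (α * (Cᶜ.card : ℝ) / 2) := by
      rw [← Finset.sum_sdiff hsubc (f := fun i => α * (z t i) ^ 2 / 2),
          ← Finset.sum_sdiff hsubc (f := fun i => α * (xhat i) ^ 2 / 2)]
      have ha : ∑ i ∈ Sᶜ \ Cᶜ, α * (z t i) ^ 2 / 2 = ∑ i ∈ Sᶜ \ Cᶜ, α * (xhat i) ^ 2 / 2 := by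
        refine Finset.sum_congr rfl fun i hi => ?_
        have : i ∈ C := by
          have := (Finset.mem_sdiff.1 hi).2
          simpa using this
        simp [hz, this]
      have hb : ∑ i ∈ Cᶜ, α * (z t i) ^ 2 / 2 =
          ∑ i ∈ Cᶜ, (α * (xhat i) ^ 2 / 2 + t * (α * xhat i) + t ^ 2 * (α / 2)) := by
        refine Finset.sum_congr rfl fun i hi => ?_
        have : i ∉ C := Finset.mem_compl.1 hi
        simp only [hz, if_neg this]
        ring
      have hb1 : ∑ i ∈ Cᶜ, t * (α * xhat i) = t * (α * SX) := by
        rw [hSX, Finset.mul_sum, Finset.mul_sum]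
      have hb2 : ∑ _i ∈ Cᶜ, t ^ 2 * (α / 2) = (Cᶜ.card : ℝ) * (t ^ 2 * (α / 2)) := by
        rw [Finset.sum_const, nsmul_eq_mul]
      rw [ha, hb, Finset.sum_add_distrib, Finset.sum_add_distrib, hb1, hb2]
      ring
    -- term 3
    have h3 : TV E W (z t) = TV E W xhat - t * SW := by
      unfold TV
      rw [← Finset.sum_sdiff hbsub (f := fun e => W e * |z t e.1 - z t e.2|),
          ← Finset.sum_sdiff hbsub (f := fun e => W e * |xhat e.1 - xhat e.2|)]
      have ha : ∑ e ∈ E \ bdry E C, W e * |z t e.1 - z t e.2| =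
          ∑ e ∈ E \ bdry E C, W e * |xhat e.1 - xhat e.2| := by
        refine Finset.sum_congr rfl fun e he => ?_
        rcases Finset.mem_sdiff.1 he with ⟨heE, heb⟩
        have hnot : ¬ ((e.1 ∈ C ∧ e.2 ∉ C) ∨ (e.1 ∉ C ∧ e.2 ∈ C)) := by
          intro hcase
          exact heb (Finset.mem_filter.2 ⟨heE, hcase⟩)
        by_cases h1' : e.1 ∈ C <;> by_cases h2' : e.2 ∈ C
        · simp [hz, h1', h2']
        · exact absurd (Or.inl ⟨h1', h2'⟩) hnot
        · exact absurd (Or.inr ⟨h1', h2'⟩) hnot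
        · simp only [hz, if_neg h1', if_neg h2']
          ring_nf
      have hb : ∑ e ∈ bdry E C, W e * |z t e.1 - z t e.2| =
          ∑ e ∈ bdry E C, W e * (|xhat e.1 - xhat e.2| - t) := by
        refine Finset.sum_congr rfl fun e he => ?_
        rcases Finset.mem_filter.1 he with ⟨_, hcase⟩
        have hlt := htle e he
        rcases hcase with ⟨h1', h2'⟩ | ⟨h1', h2'⟩
        · have hp1 : 1 / 2 < xhat e.1 := (hmem _).1 h1'
          have hp2 : ¬ (1 / 2 < xhat e.2) := fun h => h2' ((hmem _).2 h)
          push_neg at hp2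
          have hd : 0 < xhat e.1 - xhat e.2 := by linarith
          rw [abs_of_pos hd] at hlt ⊢
          simp only [hz, if_pos h1', if_neg h2']
          rw [show xhat e.1 - (xhat e.2 + t) = (xhat e.1 - xhat e.2) - t by ring,
              abs_of_nonneg (by linarith)]
        · have hp2 : 1 / 2 < xhat e.2 := (hmem _).1 h2'
          have hp1 : ¬ (1 / 2 < xhat e.1) := fun h => h1' ((hmem _).2 h)
          push_neg at hp1
          have hd : xhat e.1 - xhat e.2 < 0 := by linarith
          rw [abs_of_neg hd] at hlt ⊢
          simp only [hz, if_neg h1', if_pos h2']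
          rw [show xhat e.1 + t - xhat e.2 = -((-(xhat e.1 - xhat e.2)) - t) by ring,
              abs_neg, abs_of_nonneg (by linarith)]
      rw [ha, hb]
      rw [show (fun e => W e * (|xhat e.1 - xhat e.2| - t)) =
          (fun e : Fin n × Fin n => W e * |xhat e.1 - xhat e.2| - t * W e) from
          funext fun e => by ring]
      rw [Finset.sum_sub_distrib, ← Finset.mul_sum, hSW]
      ring
    unfold nLasso
    rw [h1, h2, h3]
    ring
  have hkey : ∀ t : ℝ, |t| < δ →
      0 ≤ t * (α * SX - lam * SW) + t ^ 2 * (α * (Cᶜ.card : ℝ) / 2) := by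
    intro t ht
    have := hprimal (z t)
    rw [hcomp t ht] at this
    linarith
  have hzero : α * SX - lam * SW = 0 :=
    quad_nonneg_zero _ _ _ hδpos (by positivity) hkey
  linarith
end

section
/- (Proposition 1, first inequality.) Let x̂ minimize the nLasso objective h over ℝ^V, let C = {i ∈ V : x̂_i > 1/2} be the thresholded cluster, and assume S ⊆ C. Then λ Σ_{e∈∂C} W_e ≤ |S|/2 − (α/2) Σ_{i∈C∖S} x̂_i. -/
open Finset

/-- Auxiliary: the perturbed signal, shifted down by `t` on the cluster `C`. -/
noncomputable def pert {n : ℕ} (C : Finset (Fin n)) (xhat : Fin n → ℝ) (t : ℝ)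
    (i : Fin n) : ℝ :=
  xhat i - (if i ∈ C then t else 0)

/-- Proposition 1, first inequality: For the thresholded cluster
`C = {i : x̂_i > 1/2}` of a nLasso minimizer with `S ⊆ C`,
`λ ∑_{e∈∂C} W_e ≤ |S|/2 - (α/2) ∑_{i∈C∖S} x̂_i`. -/
theorem prop1_first_inequality
    (n : ℕ) (E : Finset (Fin n × Fin n)) (hE : ∀ e ∈ E, e.1 < e.2)
    (W : Fin n × Fin n → ℝ) (hW : ∀ e ∈ E, 0 < W e)
    (S : Finset (Fin n)) (hS : S.Nonempty)
    (α lam : ℝ) (hα : 0 < α) (hlam : 0 < lam)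
    (xhat : Fin n → ℝ)
    (hprimal : ∀ z : Fin n → ℝ, nLasso E W S α lam xhat ≤ nLasso E W S α lam z)
    (C : Finset (Fin n)) (hC : C = Finset.univ.filter (fun i => 1 / 2 < xhat i))
    (hSC : S ⊆ C) :
    lam * ∑ e ∈ bdry E C, W e
      ≤ (S.card : ℝ) / 2 - (α / 2) * ∑ i ∈ C \ S, xhat i := by
  classical
  have hmem : ∀ i : Fin n, i ∈ C ↔ 1 / 2 < xhat i := by
    intro i; rw [hC]; simp
  set A : ℝ := ∑ i ∈ S, (1 - xhat i) - α * ∑ i ∈ C \ S, xhat i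
      - lam * ∑ e ∈ bdry E C, W e with hA
  set B : ℝ := ((S.card : ℝ) + α * ((C \ S).card : ℝ)) / 2 with hB
  have hBnn : 0 ≤ B := by positivity
  -- gaps across boundary edges are positive
  have hgap : ∀ e ∈ bdry E C, 0 < |xhat e.1 - xhat e.2| := by
    intro e he
    rw [bdry, Finset.mem_filter] at he
    rcases he.2 with ⟨h1, h2⟩ | ⟨h1, h2⟩
    · have hx1 : 1 / 2 < xhat e.1 := (hmem e.1).1 h1
      have hx2 : ¬ (1 / 2 < xhat e.2) := fun h => h2 ((hmem e.2).2 h)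
      push_neg at hx2
      rw [abs_pos, sub_ne_zero]
      exact ne_of_gt (lt_of_le_of_lt hx2 hx1)
    · have hx2 : 1 / 2 < xhat e.2 := (hmem e.2).1 h2
      have hx1 : ¬ (1 / 2 < xhat e.1) := fun h => h1 ((hmem e.1).2 h)
      push_neg at hx1
      rw [abs_pos, sub_ne_zero]
      exact ne_of_lt (lt_of_le_of_lt hx1 hx2)
  -- pointwise behaviour of the absolute values on boundary edges
  have hbdabs : ∀ (t : ℝ), 0 ≤ t → ∀ e ∈ bdry E C,
      t ≤ |xhat e.1 - xhat e.2| →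
      |pert C xhat t e.1 - pert C xhat t e.2| = |xhat e.1 - xhat e.2| - t := by
    intro t ht e he hte
    rw [bdry, Finset.mem_filter] at he
    rcases he.2 with ⟨h1, h2⟩ | ⟨h1, h2⟩
    · have hx1 : 1 / 2 < xhat e.1 := (hmem e.1).1 h1
      have hx2 : ¬ (1 / 2 < xhat e.2) := fun h => h2 ((hmem e.2).2 h)
      push_neg at hx2
      have habs : |xhat e.1 - xhat e.2| = xhat e.1 - xhat e.2 :=
        abs_of_pos (by linarith)
      rw [habs] at hte ⊢
      simp only [pert, if_pos h1, if_neg h2]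
      rw [abs_of_nonneg (by linarith)]
      ring
    · have hx2 : 1 / 2 < xhat e.2 := (hmem e.2).1 h2
      have hx1 : ¬ (1 / 2 < xhat e.1) := fun h => h1 ((hmem e.1).2 h)
      push_neg at hx1
      have habs : |xhat e.1 - xhat e.2| = -(xhat e.1 - xhat e.2) :=
        abs_of_neg (by linarith)
      rw [habs] at hte ⊢
      simp only [pert, if_neg h1, if_pos h2]
      rw [abs_of_nonpos (by linarith)]
      ring
  -- total variation of the perturbed signal
  have hTVz : ∀ (t : ℝ), 0 ≤ t → (∀ e ∈ bdry E C, t ≤ |xhat e.1 - xhat e.2|) →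
      TV E W (pert C xhat t) = TV E W xhat - t * ∑ e ∈ bdry E C, W e := by
    intro t ht htle
    have hsplit : ∀ x : Fin n → ℝ, TV E W x =
        ∑ e ∈ bdry E C, W e * |x e.1 - x e.2| +
        ∑ e ∈ E.filter (fun e => ¬ ((e.1 ∈ C ∧ e.2 ∉ C) ∨ (e.1 ∉ C ∧ e.2 ∈ C))),
          W e * |x e.1 - x e.2| := by
      intro x
      rw [TV, ← Finset.sum_filter_add_sum_filter_not E
        (fun e => (e.1 ∈ C ∧ e.2 ∉ C) ∨ (e.1 ∉ C ∧ e.2 ∈ C))]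
      rfl
    rw [hsplit (pert C xhat t), hsplit xhat]
    have h1 : ∑ e ∈ bdry E C, W e * |pert C xhat t e.1 - pert C xhat t e.2|
        = ∑ e ∈ bdry E C, W e * |xhat e.1 - xhat e.2| - t * ∑ e ∈ bdry E C, W e := by
      rw [Finset.mul_sum, ← Finset.sum_sub_distrib]
      refine Finset.sum_congr rfl fun e he => ?_
      rw [hbdabs t ht e he (htle e he)]; ring
    have h2 : ∑ e ∈ E.filter (fun e => ¬ ((e.1 ∈ C ∧ e.2 ∉ C) ∨ (e.1 ∉ C ∧ e.2 ∈ C))),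
          W e * |pert C xhat t e.1 - pert C xhat t e.2|
        = ∑ e ∈ E.filter (fun e => ¬ ((e.1 ∈ C ∧ e.2 ∉ C) ∨ (e.1 ∉ C ∧ e.2 ∈ C))),
          W e * |xhat e.1 - xhat e.2| := by
      refine Finset.sum_congr rfl fun e he => ?_
      rw [Finset.mem_filter] at he
      by_cases h1c : e.1 ∈ C <;> by_cases h2c : e.2 ∈ C
      · simp only [pert, if_pos h1c, if_pos h2c]
        congr 1; congr 1; ring
      · exact absurd (Or.inl ⟨h1c, h2c⟩) he.2
      · exact absurd (Or.inr ⟨h1c, h2c⟩) he.2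
      · simp only [pert, if_neg h1c, if_neg h2c]
        congr 1; congr 1; ring
    rw [h1, h2]; ring
  -- sum over seed nodes
  have hSsum : ∀ t : ℝ, ∑ i ∈ S, (pert C xhat t i - 1) ^ 2 / 2
      = ∑ i ∈ S, (xhat i - 1) ^ 2 / 2 + t * ∑ i ∈ S, (1 - xhat i)
        + t ^ 2 * (S.card : ℝ) / 2 := by
    intro t
    have hpt : ∀ i ∈ S, (pert C xhat t i - 1) ^ 2 / 2
        = (xhat i - 1) ^ 2 / 2 + t * (1 - xhat i) + t ^ 2 / 2 := by
      intro i hi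
      simp only [pert, if_pos (hSC hi)]
      ring
    rw [Finset.sum_congr rfl hpt, Finset.sum_add_distrib, Finset.sum_add_distrib,
      Finset.sum_const, ← Finset.mul_sum, nsmul_eq_mul]
    ring
  -- identify the non-seed cluster part
  have hcompl : Sᶜ.filter (fun i => i ∈ C) = C \ S := by
    ext i
    simp only [Finset.mem_filter, Finset.mem_compl, Finset.mem_sdiff]
    tauto
  -- sum over non-seed nodes
  have hScsum : ∀ t : ℝ, ∑ i ∈ Sᶜ, α * (pert C xhat t i) ^ 2 / 2
      = ∑ i ∈ Sᶜ, α * xhat i ^ 2 / 2 - t * (α * ∑ i ∈ C \ S, xhat i)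
        + t ^ 2 * (α * ((C \ S).card : ℝ)) / 2 := by
    intro t
    rw [← Finset.sum_filter_add_sum_filter_not Sᶜ (fun i => i ∈ C)
        (fun i => α * (pert C xhat t i) ^ 2 / 2),
      ← Finset.sum_filter_add_sum_filter_not Sᶜ (fun i => i ∈ C)
        (fun i => α * xhat i ^ 2 / 2), hcompl]
    have e1 : ∑ i ∈ C \ S, α * (pert C xhat t i) ^ 2 / 2
        = ∑ i ∈ C \ S, (α * xhat i ^ 2 / 2 - t * (α * xhat i) + t ^ 2 * α / 2) := by
      refine Finset.sum_congr rfl fun i hi => ?_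
      have hiC : i ∈ C := (Finset.mem_sdiff.1 hi).1
      simp only [pert, if_pos hiC]
      ring
    have e2 : ∑ i ∈ Sᶜ.filter (fun i => ¬ i ∈ C), α * (pert C xhat t i) ^ 2 / 2
        = ∑ i ∈ Sᶜ.filter (fun i => ¬ i ∈ C), α * xhat i ^ 2 / 2 := by
      refine Finset.sum_congr rfl fun i hi => ?_
      have : i ∉ C := (Finset.mem_filter.1 hi).2
      simp only [pert, if_neg this, sub_zero]
    rw [e1, e2, Finset.sum_add_distrib, Finset.sum_sub_distrib, Finset.sum_const,
      ← Finset.mul_sum, nsmul_eq_mul, ← Finset.mul_sum]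
    ring
  -- key identity for the perturbed objective
  have hkey : ∀ t : ℝ, 0 ≤ t → (∀ e ∈ bdry E C, t ≤ |xhat e.1 - xhat e.2|) →
      nLasso E W S α lam (pert C xhat t)
        = nLasso E W S α lam xhat + t * A + t ^ 2 * B := by
    intro t ht htle
    rw [nLasso, nLasso, hSsum t, hScsum t, hTVz t ht htle, hA, hB]
    ring
  -- a uniformly positive lower bound on the gaps
  have ht0ex : ∃ t0 : ℝ, 0 < t0 ∧ ∀ e ∈ bdry E C, t0 ≤ |xhat e.1 - xhat e.2| := by
    by_cases h : (bdry E C).Nonempty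
    · refine ⟨(bdry E C).inf' h (fun e => |xhat e.1 - xhat e.2|), ?_,
        fun e he => Finset.inf'_le _ he⟩
      rw [Finset.lt_inf'_iff]
      exact fun e he => hgap e he
    · exact ⟨1, one_pos, fun e he => absurd ⟨e, he⟩ h⟩
  -- the directional derivative is nonnegative
  have hposA : 0 ≤ A := by
    by_contra hneg
    push_neg at hneg
    obtain ⟨t0, ht0pos, ht0le⟩ := ht0ex
    have hApos : 0 < -A := by linarith
    set t : ℝ := min t0 (-A / (2 * (B + 1))) with htdef
    have htpos : 0 < t := lt_min ht0pos (by positivity)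
    have htle : ∀ e ∈ bdry E C, t ≤ |xhat e.1 - xhat e.2| :=
      fun e he => le_trans (min_le_left _ _) (ht0le e he)
    have h0 := hprimal (pert C xhat t)
    rw [hkey t htpos.le htle] at h0
    have h3 : 0 ≤ t * (A + t * B) := by nlinarith [h0]
    have h1 : 0 ≤ A + t * B := by nlinarith [h3, htpos]
    have hB1 : (0 : ℝ) < 2 * (B + 1) := by linarith
    have h2 : t * B < -A := by
      have hle : t * B ≤ (-A / (2 * (B + 1))) * B :=
        mul_le_mul_of_nonneg_right (min_le_right _ _) hBnn
      have hlt : (-A / (2 * (B + 1))) * B < -A := by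
        rw [div_mul_eq_mul_div, div_lt_iff₀ hB1]
        nlinarith
      linarith
    linarith
  -- finish
  have hS1 : ∑ i ∈ S, (1 - xhat i) ≤ (S.card : ℝ) / 2 := by
    have h : ∀ i ∈ S, (1 - xhat i) ≤ 1 / 2 := by
      intro i hi
      have := (hmem i).1 (hSC hi)
      linarith
    calc ∑ i ∈ S, (1 - xhat i) ≤ ∑ _i ∈ S, (1 / 2 : ℝ) := Finset.sum_le_sum h
      _ = (S.card : ℝ) / 2 := by
          rw [Finset.sum_const, nsmul_eq_mul]; ring
  have hCS : 0 ≤ ∑ i ∈ C \ S, xhat i := by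
    refine Finset.sum_nonneg fun i hi => ?_
    have := (hmem i).1 (Finset.mem_sdiff.1 hi).1
    linarith
  rw [hA] at hposA
  nlinarith [mul_nonneg hα.le hCS]
end

section
/- (Proposition 1, second inequality.) Let x̂ minimize the nLasso objective h over ℝ^V, let C = {i ∈ V : x̂_i > 1/2} be the thresholded cluster, and assume S ⊆ C. Then λ Σ_{e∈∂C} W_e ≤ α Σ_{i∉C} x̂_i. -/
open Finset

/-- Proposition 1, second inequality: For the thresholded cluster
`C = {i : x̂_i > 1/2}` of a nLasso minimizer with `S ⊆ C`,
`λ ∑_{e∈∂C} W_e ≤ α ∑_{i∉C} x̂_i`. -/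
theorem prop1_second_inequality
    (n : ℕ) (E : Finset (Fin n × Fin n)) (hE : ∀ e ∈ E, e.1 < e.2)
    (W : Fin n × Fin n → ℝ) (hW : ∀ e ∈ E, 0 < W e)
    (S : Finset (Fin n)) (hS : S.Nonempty)
    (α lam : ℝ) (hα : 0 < α) (hlam : 0 < lam)
    (xhat : Fin n → ℝ)
    (hprimal : ∀ z : Fin n → ℝ, nLasso E W S α lam xhat ≤ nLasso E W S α lam z)
    (C : Finset (Fin n)) (hC : C = Finset.univ.filter (fun i => 1 / 2 < xhat i))
    (hSC : S ⊆ C) :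
    lam * ∑ e ∈ bdry E C, W e ≤ α * ∑ i ∈ Cᶜ, xhat i := by
  classical
  set A := ∑ i ∈ Cᶜ, xhat i with hA
  set K := ∑ e ∈ bdry E C, W e with hK
  set c := (Cᶜ.card : ℝ) with hc
  have hc0 : (0:ℝ) ≤ c := Nat.cast_nonneg _
  have hCmem : ∀ i : Fin n, i ∈ C ↔ 1 / 2 < xhat i := by
    intro i; rw [hC]; simp
  obtain ⟨ε, hε0, hεle⟩ : ∃ ε > 0, ∀ e ∈ bdry E C, ε ≤ |xhat e.1 - xhat e.2| := by
    rcases Finset.eq_empty_or_nonempty (bdry E C) with h | h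
    · exact ⟨1, one_pos, by simp [h]⟩
    · refine ⟨(bdry E C).inf' h (fun e => |xhat e.1 - xhat e.2|), ?_,
        fun e he => Finset.inf'_le _ he⟩
      rw [gt_iff_lt, Finset.lt_inf'_iff]
      intro e he
      simp only [bdry, Finset.mem_filter] at he
      rcases he.2 with ⟨h1, h2⟩ | ⟨h1, h2⟩
      · have hx1 := (hCmem e.1).1 h1
        have hx2 : ¬ 1/2 < xhat e.2 := fun hh => h2 ((hCmem e.2).2 hh)
        push_neg at hx2
        have : xhat e.2 < xhat e.1 := by linarith
        exact abs_pos.2 (sub_ne_zero_of_ne this.ne')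
      · have hx2 := (hCmem e.2).1 h2
        have hx1 : ¬ 1/2 < xhat e.1 := fun hh => h1 ((hCmem e.1).2 hh)
        push_neg at hx1
        have : xhat e.1 < xhat e.2 := by linarith
        exact abs_pos.2 (sub_ne_zero_of_ne this.ne)
  have key : ∀ t : ℝ, 0 < t → t < ε → lam * K ≤ α * A + α * t * c / 2 := by
    intro t ht0 htε
    set z : Fin n → ℝ := fun i => if i ∈ C then xhat i else xhat i + t with hzdef
    have hz1 : ∑ i ∈ S, (z i - 1) ^ 2 / 2 = ∑ i ∈ S, (xhat i - 1) ^ 2 / 2 :=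
      Finset.sum_congr rfl fun i hi => by simp [hzdef, hSC hi]
    have hsub : Cᶜ ⊆ Sᶜ := fun i hi =>
      Finset.mem_compl.2 fun h => (Finset.mem_compl.1 hi) (hSC h)
    have hz2 : ∑ i ∈ Sᶜ, α * z i ^ 2 / 2
        = ∑ i ∈ Sᶜ, α * xhat i ^ 2 / 2 + (α * t * A + α * t ^ 2 * c / 2) := by
      have h1 : ∑ i ∈ Cᶜ, (α * z i ^ 2 / 2 - α * xhat i ^ 2 / 2)
          = ∑ i ∈ Sᶜ, (α * z i ^ 2 / 2 - α * xhat i ^ 2 / 2) := by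
        refine Finset.sum_subset hsub fun i _ hi => ?_
        have hiC : i ∈ C := by simpa using hi
        simp [hzdef, hiC]
      have h2 : ∑ i ∈ Cᶜ, (α * z i ^ 2 / 2 - α * xhat i ^ 2 / 2)
          = α * t * A + α * t ^ 2 * c / 2 := by
        have hpt : ∀ i ∈ Cᶜ, α * z i ^ 2 / 2 - α * xhat i ^ 2 / 2
            = α * t * xhat i + α * t ^ 2 / 2 := by
          intro i hi
          have hiC : i ∉ C := Finset.mem_compl.1 hi
          simp only [hzdef, if_neg hiC]
          ring
        rw [Finset.sum_congr rfl hpt, Finset.sum_add_distrib, Finset.sum_const,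
          ← Finset.mul_sum, ← hA, nsmul_eq_mul, ← hc]
        ring
      have h3 : ∑ i ∈ Sᶜ, (α * z i ^ 2 / 2 - α * xhat i ^ 2 / 2)
          = ∑ i ∈ Sᶜ, α * z i ^ 2 / 2 - ∑ i ∈ Sᶜ, α * xhat i ^ 2 / 2 :=
        Finset.sum_sub_distrib _ _
      linarith
    have hz3 : TV E W z = TV E W xhat - t * K := by
      have hpt : ∀ e ∈ E, W e * |z e.1 - z e.2|
          = W e * |xhat e.1 - xhat e.2| - (if e ∈ bdry E C then t * W e else 0) := by
        intro e he
        by_cases h1 : e.1 ∈ C <;> by_cases h2 : e.2 ∈ C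
        · have hnb : e ∉ bdry E C := by simp [bdry, h1, h2]
          have hzz : z e.1 - z e.2 = xhat e.1 - xhat e.2 := by
            simp only [hzdef, if_pos h1, if_pos h2]
          rw [hzz, if_neg hnb]; ring
        · have hbd : e ∈ bdry E C := by
            simp only [bdry, Finset.mem_filter]; exact ⟨he, Or.inl ⟨h1, h2⟩⟩
          have hge := hεle e hbd
          have hx1 := (hCmem e.1).1 h1
          have hx2 : ¬ 1/2 < xhat e.2 := fun hh => h2 ((hCmem e.2).2 hh)
          push_neg at hx2
          have hpos : 0 < xhat e.1 - xhat e.2 := by linarith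
          rw [abs_of_pos hpos] at hge
          have habs1 : |xhat e.1 - xhat e.2| = xhat e.1 - xhat e.2 := abs_of_pos hpos
          have habs2 : |z e.1 - z e.2| = xhat e.1 - xhat e.2 - t := by
            have hzz1 : z e.1 = xhat e.1 := by simp [hzdef, h1]
            have hzz2 : z e.2 = xhat e.2 + t := by simp [hzdef, h2]
            rw [hzz1, hzz2, show xhat e.1 - (xhat e.2 + t) = xhat e.1 - xhat e.2 - t by ring,
              abs_of_pos (by linarith)]
          rw [habs1, habs2, if_pos hbd]; ring
        · have hbd : e ∈ bdry E C := by
            simp only [bdry, Finset.mem_filter]; exact ⟨he, Or.inr ⟨h1, h2⟩⟩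
          have hge := hεle e hbd
          have hx2 := (hCmem e.2).1 h2
          have hx1 : ¬ 1/2 < xhat e.1 := fun hh => h1 ((hCmem e.1).2 hh)
          push_neg at hx1
          have hneg : xhat e.1 - xhat e.2 < 0 := by linarith
          rw [abs_of_neg hneg] at hge
          have habs1 : |xhat e.1 - xhat e.2| = xhat e.2 - xhat e.1 := by
            rw [abs_of_neg hneg]; ring
          have habs2 : |z e.1 - z e.2| = xhat e.2 - xhat e.1 - t := by
            have hzz1 : z e.1 = xhat e.1 + t := by simp [hzdef, h1]
            have hzz2 : z e.2 = xhat e.2 := by simp [hzdef, h2]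
            rw [hzz1, hzz2,
              show xhat e.1 + t - xhat e.2 = -(xhat e.2 - xhat e.1 - t) by ring,
              abs_neg, abs_of_pos (by linarith)]
          rw [habs1, habs2, if_pos hbd]; ring
        · have hnb : e ∉ bdry E C := by simp [bdry, h1, h2]
          have hzz : z e.1 - z e.2 = xhat e.1 - xhat e.2 := by
            simp only [hzdef, if_neg h1, if_neg h2]; ring
          rw [hzz, if_neg hnb]; ring
      have hsplit : TV E W z
          = TV E W xhat - ∑ e ∈ E, (if e ∈ bdry E C then t * W e else 0) := by
        rw [TV, Finset.sum_congr rfl hpt, Finset.sum_sub_distrib]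
        rfl
      have hsum : ∑ e ∈ E, (if e ∈ bdry E C then t * W e else 0)
          = t * K := by
        have hbsub : bdry E C ⊆ E := Finset.filter_subset _ _
        rw [Finset.sum_ite_mem, Finset.inter_eq_right.2 hbsub, ← Finset.mul_sum, ← hK]
      rw [hsplit, hsum]
    have hineq := hprimal z
    simp only [nLasso] at hineq
    rw [hz1, hz2, hz3] at hineq
    have h' : lam * K * t ≤ (α * A + α * t * c / 2) * t := by nlinarith [hineq]
    exact le_of_mul_le_mul_right h' ht0
  have hfin : ∀ η : ℝ, 0 < η → lam * K ≤ α * A + η := by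
    intro η hη
    set t := min (ε / 2) (2 * η / (α * (c + 1))) with htdef
    have htpos : 0 < t := lt_min (by linarith) (by positivity)
    have htε : t < ε := lt_of_le_of_lt (min_le_left _ _) (by linarith)
    have h1 := key t htpos htε
    have h2 : α * t * c / 2 ≤ η := by
      have ht2 : t ≤ 2 * η / (α * (c + 1)) := min_le_right _ _
      have hpos : 0 < α * (c + 1) := by positivity
      rw [le_div_iff₀ hpos] at ht2
      nlinarith [mul_nonneg hα.le htpos.le]
    linarith
  exact le_of_forall_pos_le_add hfin
end

section
/- Let x̂ minimize the nLasso objective h over ℝ^V, let C = {i ∈ V : x̂_i > 1/2} be the thresholded cluster, and assume S ⊆ C. If U is an upper bound on the number of nodes i ∉ C with x̂_i ≠ 0, i.e. |{i ∈ V∖C : x̂_i ≠ 0}| ≤ U, then λ Σ_{e∈∂C} W_e ≤ U α / 2. -/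
open Finset

set_option maxHeartbeats 1000000 in
/-- If at most `U` nodes outside the thresholded cluster `C` carry a nonzero
value of the nLasso minimizer `x̂`, then `λ ∑_{e∈∂C} W_e ≤ U α / 2`. -/
theorem weighted_boundary_le_U_alpha_half
    (n : ℕ) (E : Finset (Fin n × Fin n)) (hE : ∀ e ∈ E, e.1 < e.2)
    (W : Fin n × Fin n → ℝ) (hW : ∀ e ∈ E, 0 < W e)
    (S : Finset (Fin n)) (hS : S.Nonempty)
    (α lam : ℝ) (hα : 0 < α) (hlam : 0 < lam)
    (xhat : Fin n → ℝ)
    (hprimal : ∀ z : Fin n → ℝ, nLasso E W S α lam xhat ≤ nLasso E W S α lam z)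
    (C : Finset (Fin n)) (hC : C = Finset.univ.filter (fun i => 1 / 2 < xhat i))
    (hSC : S ⊆ C)
    (U : ℝ) (hU : ((Cᶜ.filter (fun i => xhat i ≠ 0)).card : ℝ) ≤ U) :
    lam * ∑ e ∈ bdry E C, W e ≤ U * α / 2 := by
  classical
  set B := ∑ e ∈ bdry E C, W e with hBdef
  have hxC : ∀ i ∈ C, 1/2 < xhat i := by
    intro i hi; rw [hC, Finset.mem_filter] at hi; exact hi.2
  have hxNC : ∀ i ∉ C, xhat i ≤ 1/2 := by
    intro i hi
    by_contra h
    push_neg at h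
    exact hi (by rw [hC]; exact Finset.mem_filter.mpr ⟨Finset.mem_univ i, h⟩)
  have hgap : ∀ e ∈ bdry E C, 0 < |xhat e.1 - xhat e.2| := by
    intro e he
    rw [bdry, Finset.mem_filter] at he
    rcases he.2 with ⟨h1, h2⟩ | ⟨h1, h2⟩
    · have := lt_of_le_of_lt (hxNC _ h2) (hxC _ h1)
      rw [abs_pos]; intro hcon; rw [sub_eq_zero] at hcon; linarith
    · have := lt_of_le_of_lt (hxNC _ h1) (hxC _ h2)
      rw [abs_pos]; intro hcon; rw [sub_eq_zero] at hcon; linarith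
  have hFne : (insert (1:ℝ) ((bdry E C).image (fun e => |xhat e.1 - xhat e.2|))).Nonempty :=
    Finset.insert_nonempty _ _
  set δ := (insert (1:ℝ) ((bdry E C).image (fun e => |xhat e.1 - xhat e.2|))).min' hFne
    with hδdef
  have hδpos : 0 < δ := by
    have hmem := Finset.min'_mem _ hFne
    rw [Finset.mem_insert] at hmem
    rcases hmem with h | h
    · rw [← hδdef] at h; rw [h]; norm_num
    · obtain ⟨e, he, hgapeq⟩ := Finset.mem_image.mp h
      rw [← hδdef] at hgapeq
      rw [← hgapeq]; exact hgap e he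
  have hδle : ∀ e ∈ bdry E C, δ ≤ |xhat e.1 - xhat e.2| := by
    intro e he
    exact Finset.min'_le _ _ (Finset.mem_insert_of_mem (Finset.mem_image_of_mem _ he))
  clear_value δ
  set N : ℝ := ((Cᶜ : Finset (Fin n)).card : ℝ) with hNdef
  have hN0 : 0 ≤ N := Nat.cast_nonneg _
  set A := ∑ i ∈ Cᶜ, xhat i with hAdef
  clear_value B N A
  -- Key inequality for each small positive t
  have key : ∀ t : ℝ, 0 < t → t ≤ δ → lam * B ≤ α * A + α * t * N / 2 := by
    intro t ht htδ
    set z : Fin n → ℝ := fun i => if i ∈ C then xhat i else xhat i + t with hzdef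
    have piece1 : ∑ i ∈ S, (z i - 1) ^ 2 / 2 = ∑ i ∈ S, (xhat i - 1) ^ 2 / 2 :=
      Finset.sum_congr rfl fun i hi => by rw [hzdef]; simp only [if_pos (hSC hi)]
    have piece2 : ∑ i ∈ Sᶜ, α * z i ^ 2 / 2
        = ∑ i ∈ Sᶜ, α * xhat i ^ 2 / 2 + ∑ i ∈ Cᶜ, (α * t * xhat i + α * t ^ 2 / 2) := by
      have hfil : Sᶜ.filter (fun i => i ∉ C) = Cᶜ := by
        ext i
        simp only [Finset.mem_filter, Finset.mem_compl]
        exact ⟨fun h => h.2, fun h => ⟨fun hs => h (hSC hs), h⟩⟩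
      calc ∑ i ∈ Sᶜ, α * z i ^ 2 / 2
          = ∑ i ∈ Sᶜ, (α * xhat i ^ 2 / 2
              + if i ∉ C then (α * t * xhat i + α * t ^ 2 / 2) else 0) := by
            refine Finset.sum_congr rfl fun i _ => ?_
            by_cases hi : i ∈ C
            · rw [hzdef]; simp only [if_pos hi, if_neg (not_not_intro hi)]; ring
            · rw [hzdef]; simp only [if_neg hi, if_pos hi]; ring
        _ = ∑ i ∈ Sᶜ, α * xhat i ^ 2 / 2
              + ∑ i ∈ Sᶜ, (if i ∉ C then (α * t * xhat i + α * t ^ 2 / 2) else 0) :=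
            Finset.sum_add_distrib
        _ = ∑ i ∈ Sᶜ, α * xhat i ^ 2 / 2 + ∑ i ∈ Cᶜ, (α * t * xhat i + α * t ^ 2 / 2) := by
            rw [← Finset.sum_filter, hfil]
    have piece3 : TV E W z = TV E W xhat - t * B := by
      unfold TV
      have hsplit := Finset.sum_filter_add_sum_filter_not E
        (fun e => (e.1 ∈ C ∧ e.2 ∉ C) ∨ (e.1 ∉ C ∧ e.2 ∈ C))
        (fun e => W e * |z e.1 - z e.2|)
      have hsplit' := Finset.sum_filter_add_sum_filter_not E
        (fun e => (e.1 ∈ C ∧ e.2 ∉ C) ∨ (e.1 ∉ C ∧ e.2 ∈ C))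
        (fun e => W e * |xhat e.1 - xhat e.2|)
      have habs : ∀ e ∈ bdry E C, W e * |z e.1 - z e.2| = W e * |xhat e.1 - xhat e.2| - W e * t := by
        intro e he
        have hδe := hδle e he
        rw [bdry, Finset.mem_filter] at he
        rcases he.2 with ⟨h1, h2⟩ | ⟨h1, h2⟩
        · have hgt : xhat e.2 < xhat e.1 := lt_of_le_of_lt (hxNC _ h2) (hxC _ h1)
          have habs1 : |xhat e.1 - xhat e.2| = xhat e.1 - xhat e.2 := abs_of_pos (by linarith)
          have hδe' : δ ≤ xhat e.1 - xhat e.2 := habs1 ▸ hδe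
          have hz1 : z e.1 = xhat e.1 := by rw [hzdef]; simp only [if_pos h1]
          have hz2 : z e.2 = xhat e.2 + t := by rw [hzdef]; simp only [if_neg h2]
          rw [hz1, hz2, habs1,
            show xhat e.1 - (xhat e.2 + t) = (xhat e.1 - xhat e.2) - t by ring,
            abs_of_nonneg (by linarith)]
          ring
        · have hgt : xhat e.1 < xhat e.2 := lt_of_le_of_lt (hxNC _ h1) (hxC _ h2)
          have habs1 : |xhat e.1 - xhat e.2| = xhat e.2 - xhat e.1 := by
            rw [abs_sub_comm]; exact abs_of_pos (by linarith)
          have hδe' : δ ≤ xhat e.2 - xhat e.1 := habs1 ▸ hδe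
          have hz1 : z e.1 = xhat e.1 + t := by rw [hzdef]; simp only [if_neg h1]
          have hz2 : z e.2 = xhat e.2 := by rw [hzdef]; simp only [if_pos h2]
          rw [hz1, hz2, habs1,
            show xhat e.1 + t - xhat e.2 = -((xhat e.2 - xhat e.1) - t) by ring,
            abs_neg, abs_of_nonneg (by linarith)]
          ring
      have hnb : ∀ e ∈ E.filter (fun e => ¬((e.1 ∈ C ∧ e.2 ∉ C) ∨ (e.1 ∉ C ∧ e.2 ∈ C))),
          W e * |z e.1 - z e.2| = W e * |xhat e.1 - xhat e.2| := by
        intro e he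
        rw [Finset.mem_filter] at he
        have hp := he.2
        by_cases h1 : e.1 ∈ C <;> by_cases h2 : e.2 ∈ C
        · rw [hzdef]; simp only [if_pos h1, if_pos h2]
        · exact absurd (Or.inl ⟨h1, h2⟩) hp
        · exact absurd (Or.inr ⟨h1, h2⟩) hp
        · rw [hzdef]; simp only [if_neg h1, if_neg h2]
          rw [show xhat e.1 + t - (xhat e.2 + t) = xhat e.1 - xhat e.2 by ring]
      have hb : ∑ e ∈ E.filter (fun e => (e.1 ∈ C ∧ e.2 ∉ C) ∨ (e.1 ∉ C ∧ e.2 ∈ C)),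
          W e * |z e.1 - z e.2|
          = (∑ e ∈ bdry E C, W e * |xhat e.1 - xhat e.2|) - t * B := by
        rw [show (E.filter (fun e => (e.1 ∈ C ∧ e.2 ∉ C) ∨ (e.1 ∉ C ∧ e.2 ∈ C))) = bdry E C
          from rfl]
        rw [Finset.sum_congr rfl habs, Finset.sum_sub_distrib, hBdef, Finset.mul_sum]
        congr 1
        exact Finset.sum_congr rfl fun e _ => mul_comm _ _
      rw [← hsplit, ← hsplit', hb,
        Finset.sum_congr rfl hnb,
        show (E.filter (fun e => (e.1 ∈ C ∧ e.2 ∉ C) ∨ (e.1 ∉ C ∧ e.2 ∈ C))) = bdry E C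
          from rfl]
      ring
    have hcomp : nLasso E W S α lam z
        = nLasso E W S α lam xhat + (∑ i ∈ Cᶜ, (α * t * xhat i + α * t ^ 2 / 2)) - lam * (t * B) := by
      unfold nLasso
      rw [piece1, piece2, piece3]
      ring
    have h0 := hprimal z
    rw [hcomp] at h0
    have hsum : ∑ i ∈ Cᶜ, (α * t * xhat i + α * t ^ 2 / 2) = α * t * A + N * (α * t ^ 2 / 2) := by
      rw [Finset.sum_add_distrib, ← Finset.mul_sum, Finset.sum_const, nsmul_eq_mul, hAdef, hNdef]
    rw [hsum] at h0
    have h2 : t * (lam * B) ≤ t * (α * A + α * t * N / 2) := by nlinarith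
    exact le_of_mul_le_mul_left h2 ht
  -- bound A ≤ U / 2
  have hA : A ≤ U / 2 := by
    have h1 : A = ∑ i ∈ Cᶜ.filter (fun i => xhat i ≠ 0), xhat i := by
      rw [hAdef, Finset.sum_filter_ne_zero]
    have h2 : ∑ i ∈ Cᶜ.filter (fun i => xhat i ≠ 0), xhat i
        ≤ (Cᶜ.filter (fun i => xhat i ≠ 0)).card • (1/2 : ℝ) := by
      refine Finset.sum_le_card_nsmul _ _ _ fun i hi => ?_
      have := (Finset.mem_filter.mp hi).1
      exact hxNC i (Finset.mem_compl.mp this)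
    rw [nsmul_eq_mul] at h2
    have := hU
    rw [h1]
    nlinarith
  -- epsilon argument
  have heps : ∀ ε : ℝ, 0 < ε → lam * B ≤ U * α / 2 + ε := by
    intro ε hε
    have hden : 0 < α * (N + 1) := by positivity
    set t := min δ (2 * ε / (α * (N + 1))) with htdef
    have ht : 0 < t := lt_min hδpos (by positivity)
    have h2 : t ≤ 2 * ε / (α * (N + 1)) := min_le_right _ _
    have htδ : t ≤ δ := min_le_left _ _
    clear_value t
    have h1 := key t ht htδ
    have h3 : t * (α * (N + 1)) ≤ 2 * ε := by
      rw [div_eq_mul_inv] at h2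
      calc t * (α * (N + 1)) ≤ (2 * ε * (α * (N + 1))⁻¹) * (α * (N + 1)) :=
            mul_le_mul_of_nonneg_right h2 hden.le
        _ = 2 * ε := by rw [mul_assoc, inv_mul_cancel₀ hden.ne', mul_one]
    have h4 : α * t * N / 2 ≤ ε := by nlinarith [mul_pos ht hα]
    have h5 : α * A ≤ α * (U / 2) := mul_le_mul_of_nonneg_left hA hα.le
    calc lam * B ≤ α * A + α * t * N / 2 := h1
      _ ≤ α * (U / 2) + ε := by linarith
      _ = U * α / 2 + ε := by ring
  by_contra hcon
  push_neg at hcon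
  have := heps ((lam * B - U * α / 2) / 2) (by linarith)
  linarith
end
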